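/- arXiv:2605.31388 — 3 statements merged into one kernel-verified Lean document; each statement's English description precedes it below -/
import Mathlib

section
/- In the finite soft MOMDP setup, the fixed-point map of the soft Bellman operator is convex in the parameter: if θ, θ' ∈ ℝ^n, t ∈ [0,1], and v, v', v'' : S → ℝ satisfy v = T_θ v, v' = T_{θ'} v', and v'' = T_{tθ+(1−t)θ'} v'', then for every state s, v''(s) ≤ t·v(s) + (1−t)·v'(s). -/
open Finset Real

/-- The soft (entropy-regularized) Bellman operator of a finite multi-objective MDP:
`(T_θ v)(s) = β log Σ_a exp((⟨θ, r(s,a)⟩ + γ Σ_{s'} T(s'|s,a) v(s'))/β)`. -/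
noncomputable def softBellman {p n : ℕ} {A : Type*} [Fintype A]
    (T : Fin p → A → Fin p → ℝ) (γ β : ℝ) (r : Fin p → A → Fin n → ℝ)
    (θ : Fin n → ℝ) (v : Fin p → ℝ) : Fin p → ℝ :=
  fun s => β * Real.log (∑ a : A, Real.exp
    ((∑ i, θ i * r s a i + γ * ∑ s', T s a s' * v s') / β))

lemma lse_pos {A : Type*} [Fintype A] [Nonempty A] (x : A → ℝ) :
    0 < ∑ a : A, Real.exp (x a) :=
  Finset.sum_pos (fun _ _ => Real.exp_pos _) Finset.univ_nonempty

lemma lse_mono {A : Type*} [Fintype A] [Nonempty A] (x y : A → ℝ) (h : ∀ a, x a ≤ y a) :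
    Real.log (∑ a : A, Real.exp (x a)) ≤ Real.log (∑ a : A, Real.exp (y a)) :=
  Real.log_le_log (lse_pos x) (Finset.sum_le_sum fun a _ => Real.exp_le_exp.2 (h a))

lemma lse_shift {A : Type*} [Fintype A] [Nonempty A] (x : A → ℝ) (c : ℝ) :
    Real.log (∑ a : A, Real.exp (x a + c)) = Real.log (∑ a : A, Real.exp (x a)) + c := by
  simp_rw [Real.exp_add, ← Finset.sum_mul]
  rw [Real.log_mul (ne_of_gt (lse_pos x)) (Real.exp_ne_zero c), Real.log_exp]

lemma lse_convex {A : Type*} [Fintype A] [Nonempty A] (x y : A → ℝ) (t : ℝ)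
    (ht0 : 0 ≤ t) (ht1 : t ≤ 1) :
    Real.log (∑ a : A, Real.exp (t * x a + (1 - t) * y a)) ≤
      t * Real.log (∑ a : A, Real.exp (x a)) +
        (1 - t) * Real.log (∑ a : A, Real.exp (y a)) := by
  rcases eq_or_lt_of_le ht0 with h0 | h0
  · simp [← h0]
  rcases eq_or_lt_of_le ht1 with h1 | h1
  · simp [h1]
  have ht1' : 0 < 1 - t := by linarith
  have hpq : (1 / t).HolderConjugate (1 / (1 - t)) := by
    constructor
    · rw [one_div, one_div, inv_inv, inv_inv, inv_one]; ring
    · positivity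
    · positivity
  have hH := Real.inner_le_Lp_mul_Lq_of_nonneg (s := Finset.univ)
    (f := fun a : A => Real.exp (t * x a)) (g := fun a : A => Real.exp ((1 - t) * y a)) hpq
    (fun a _ => (Real.exp_pos _).le) (fun a _ => (Real.exp_pos _).le)
  have e1 : ∀ a : A, Real.exp (t * x a) ^ (1 / t) = Real.exp (x a) := fun a => by
    rw [← Real.exp_mul]; congr 1; field_simp
  have e2 : ∀ a : A, Real.exp ((1 - t) * y a) ^ (1 / (1 - t)) = Real.exp (y a) := fun a => by
    rw [← Real.exp_mul]; congr 1; field_simp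
  have e3 : (1 : ℝ) / (1 / t) = t := one_div_one_div t
  have e4 : (1 : ℝ) / (1 / (1 - t)) = 1 - t := one_div_one_div _
  simp_rw [e1, e2, e3, e4, ← Real.exp_add] at hH
  have hlog := Real.log_le_log (lse_pos (fun a => t * x a + (1 - t) * y a)) hH
  rw [Real.log_mul (by positivity) (by positivity), Real.log_rpow (lse_pos x),
    Real.log_rpow (lse_pos y)] at hlog
  exact hlog

/-- Convexity of the soft fixed point in the parameter `θ`: if `v`, `v'`, `v''` are the
fixed points of the soft Bellman operators at parameters `θ`, `θ'`, `t θ + (1-t) θ'`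
respectively, then `v''(s) ≤ t v(s) + (1-t) v'(s)` for every state `s`. -/
theorem stmt_2 {p n : ℕ} {A : Type*} [Fintype A] [Nonempty A]
    (T : Fin p → A → Fin p → ℝ)
    (hT0 : ∀ s a s', 0 ≤ T s a s') (hT1 : ∀ s a, ∑ s', T s a s' = 1)
    (γ : ℝ) (hγ0 : 0 ≤ γ) (hγ1 : γ < 1)
    (β : ℝ) (hβ : 0 < β)
    (r : Fin p → A → Fin n → ℝ)
    (θ θ' : Fin n → ℝ) (t : ℝ) (ht0 : 0 ≤ t) (ht1 : t ≤ 1)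
    (v v' v'' : Fin p → ℝ)
    (hv : v = softBellman T γ β r θ v)
    (hv' : v' = softBellman T γ β r θ' v')
    (hv'' : v'' = softBellman T γ β r (t • θ + (1 - t) • θ') v'') :
    ∀ s, v'' s ≤ t * v s + (1 - t) * v' s := by
  intro s
  have hp : Nonempty (Fin p) := ⟨s⟩
  set w : Fin p → ℝ := fun s => t * v s + (1 - t) * v' s with hw
  obtain ⟨s₀, -, hs₀⟩ := Finset.exists_max_image Finset.univ (fun s => v'' s - w s)
    ⟨s, Finset.mem_univ s⟩
  set M := v'' s₀ - w s₀ with hM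
  set x : A → ℝ := fun a => (∑ i, θ i * r s₀ a i + γ * ∑ s', T s₀ a s' * v s') / β with hx
  set y : A → ℝ := fun a => (∑ i, θ' i * r s₀ a i + γ * ∑ s', T s₀ a s' * v' s') / β with hy
  have hz : ∀ a : A,
      (∑ i, (t • θ + (1 - t) • θ') i * r s₀ a i + γ * ∑ s', T s₀ a s' * v'' s') / β
        ≤ t * x a + (1 - t) * y a + γ * M / β := by
    intro a
    have hθ : ∑ i, (t • θ + (1 - t) • θ') i * r s₀ a i
        = t * ∑ i, θ i * r s₀ a i + (1 - t) * ∑ i, θ' i * r s₀ a i := by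
      rw [Finset.mul_sum, Finset.mul_sum, ← Finset.sum_add_distrib]
      apply Finset.sum_congr rfl; intro i _
      simp only [Pi.add_apply, Pi.smul_apply, smul_eq_mul]; ring
    have hTv : ∑ s', T s₀ a s' * v'' s'
        ≤ t * ∑ s', T s₀ a s' * v s' + (1 - t) * ∑ s', T s₀ a s' * v' s' + M := by
      have step : ∀ s', T s₀ a s' * v'' s' ≤ T s₀ a s' * (w s' + M) := fun s' => by
        have h := hs₀ s' (Finset.mem_univ s')
        apply mul_le_mul_of_nonneg_left _ (hT0 s₀ a s')
        rw [hM]; linarith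
      calc ∑ s', T s₀ a s' * v'' s' ≤ ∑ s', T s₀ a s' * (w s' + M) :=
            Finset.sum_le_sum fun s' _ => step s'
        _ = ∑ s', (t * (T s₀ a s' * v s') + ((1 - t) * (T s₀ a s' * v' s')
              + T s₀ a s' * M)) := by
            apply Finset.sum_congr rfl; intro s' _; rw [hw]; ring
        _ = t * ∑ s', T s₀ a s' * v s' + (1 - t) * ∑ s', T s₀ a s' * v' s' + M := by
            rw [Finset.sum_add_distrib, Finset.sum_add_distrib, ← Finset.mul_sum,
              ← Finset.mul_sum, ← Finset.sum_mul, hT1 s₀ a, one_mul, add_assoc]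
    rw [div_le_iff₀ hβ, hx, hy]
    have hx' : (t * ((∑ i, θ i * r s₀ a i + γ * ∑ s', T s₀ a s' * v s') / β)
        + (1 - t) * ((∑ i, θ' i * r s₀ a i + γ * ∑ s', T s₀ a s' * v' s') / β)
        + γ * M / β) * β
        = t * (∑ i, θ i * r s₀ a i + γ * ∑ s', T s₀ a s' * v s')
          + (1 - t) * (∑ i, θ' i * r s₀ a i + γ * ∑ s', T s₀ a s' * v' s') + γ * M := by
      field_simp
    rw [hx', hθ]
    nlinarith [mul_le_mul_of_nonneg_left hTv hγ0]
  have hv''s₀ : v'' s₀ ≤ w s₀ + γ * M := by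
    have h1 : v'' s₀ = β * Real.log (∑ a : A, Real.exp
        ((∑ i, (t • θ + (1 - t) • θ') i * r s₀ a i + γ * ∑ s', T s₀ a s' * v'' s') / β)) := by
      conv_lhs => rw [hv'']
      rfl
    have h2 : Real.log (∑ a : A, Real.exp
        ((∑ i, (t • θ + (1 - t) • θ') i * r s₀ a i + γ * ∑ s', T s₀ a s' * v'' s') / β))
        ≤ Real.log (∑ a : A, Real.exp (t * x a + (1 - t) * y a + γ * M / β)) :=
      lse_mono _ _ hz
    have h3 : Real.log (∑ a : A, Real.exp (t * x a + (1 - t) * y a + γ * M / β))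
        = Real.log (∑ a : A, Real.exp (t * x a + (1 - t) * y a)) + γ * M / β :=
      lse_shift _ _
    have h4 := lse_convex x y t ht0 ht1
    have hvs₀ : v s₀ = β * Real.log (∑ a : A, Real.exp (x a)) := by
      conv_lhs => rw [hv]
      rfl
    have hv's₀ : v' s₀ = β * Real.log (∑ a : A, Real.exp (y a)) := by
      conv_lhs => rw [hv']
      rfl
    rw [h1]
    have h5 : β * Real.log (∑ a : A, Real.exp
        ((∑ i, (t • θ + (1 - t) • θ') i * r s₀ a i + γ * ∑ s', T s₀ a s' * v'' s') / β))
        ≤ β * (Real.log (∑ a : A, Real.exp (t * x a + (1 - t) * y a)) + γ * M / β) := by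
      rw [← h3]; exact mul_le_mul_of_nonneg_left h2 hβ.le
    refine h5.trans ?_
    have h6 : β * (Real.log (∑ a : A, Real.exp (t * x a + (1 - t) * y a)) + γ * M / β)
        ≤ β * (t * Real.log (∑ a : A, Real.exp (x a))
          + (1 - t) * Real.log (∑ a : A, Real.exp (y a)) + γ * M / β) := by
      apply mul_le_mul_of_nonneg_left _ hβ.le
      linarith
    refine h6.trans (le_of_eq ?_)
    rw [hw]
    simp only [hvs₀, hv's₀]
    field_simp
  have hws₀ : w s₀ = t * v s₀ + (1 - t) * v' s₀ := rfl
  have hws : w s = t * v s + (1 - t) * v' s := rfl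
  have hfin : v'' s - w s ≤ M := hs₀ s (Finset.mem_univ s)
  have hMγ : M ≤ γ * M := by linarith [hv''s₀, hM, hws₀]
  have hM0 : M ≤ 0 := by nlinarith [hMγ, hγ1]
  linarith [hfin, hws, hM0]
end

section
/- Strong duality for constrained entropy-regularized max-min MORL (Proposition 3.2): in the finite soft MOMDP setup with rewards split as r^{(1)},…,r^{(K)} (objectives) and c^{(1)},…,c^{(L)} (constraints), initial distribution μ0 and thresholds C^{(1)},…,C^{(L)}, consider the primal problem: maximize over ρ : S×A → ℝ with ρ ≥ 0, satisfying the Bellman flow equations Σ_{a'} ρ(s',a') = μ0(s') + γ Σ_{(s,a)} T(s'|s,a) ρ(s,a) for all s', and the constraints Σ_{(s,a)} c^{(l)}(s,a) ρ(s,a) ≥ C^{(l)} for l = 1,…,L, the objective min_{1≤k≤K} (Σ_{(s,a)} r^{(k)}(s,a) ρ(s,a)) − β Σ_{(s,a)} ρ(s,a) log( ρ(s,a) / Σ_{a'} ρ(s,a') ) (with the convention 0·log 0 = 0). Suppose there exists a strictly feasible ρ̄ (ρ̄(s,a) > 0 for all (s,a) and all L constraint inequalities strict). Then the primal optimal value equals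 inf over u ∈ ℝ_+^L and w in the simplex Δ^K of L(u,w) = Σ_s μ0(s) v*_{(u,w)}(s) − Σ_{l=1}^L u_l C^{(l)}, where v*_{(u,w)} is the unique fixed point of the soft Bellman operator T_{(u,w)}. -/
open Finset Real

/-- Log-sum inequality with `0 log 0 = 0` conventions. -/
lemma logsum {ι : Type*} [Fintype ι] (p q : ι → ℝ) (hp : ∀ i, 0 ≤ p i)
    (hq : ∀ i, 0 ≤ q i) (hpq : ∀ i, q i = 0 → p i = 0) :
    (∑ i, p i) * Real.log ((∑ i, p i) / (∑ i, q i)) ≤ ∑ i, p i * Real.log (p i / q i) := by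
  by_cases hP : (∑ i, p i) = 0
  · have hz : ∀ i, p i = 0 := fun i => by
      have := (Finset.sum_eq_zero_iff_of_nonneg (fun i _ => hp i)).mp hP
      exact this i (mem_univ i)
    simp [hP, hz]
  have hS : 0 < ∑ i, p i := lt_of_le_of_ne (Finset.sum_nonneg fun i _ => hp i) (Ne.symm hP)
  have hQ : 0 < ∑ i, q i := by
    rcases (Finset.sum_nonneg fun i _ => hq i).lt_or_eq with h | h
    · exact h
    · exfalso; apply hP
      have hz : ∀ i, q i = 0 := fun i => by
        have := (Finset.sum_eq_zero_iff_of_nonneg (fun i _ => hq i)).mp h.symm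
        exact this i (mem_univ i)
      exact Finset.sum_eq_zero fun i _ => hpq i (hz i)
  set S := ∑ i, p i
  set Q := ∑ i, q i
  -- termwise: p i * log (S/Q) - p i * log (p i / q i) ≤ (S/Q) * q i - p i
  have key : ∀ i, p i * Real.log (S / Q) - p i * Real.log (p i / q i) ≤ (S / Q) * q i - p i := by
    intro i
    rcases (hp i).lt_or_eq with hpi | hpi
    · have hqi : 0 < q i := by
        rcases (hq i).lt_or_eq with h | h
        · exact h
        · exact absurd (hpq i h.symm) (ne_of_gt hpi)
      have harg : 0 < S * q i / (Q * p i) := by positivity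
      have hlog := Real.log_le_sub_one_of_pos harg
      have hmul := mul_le_mul_of_nonneg_left hlog (hp i)
      calc p i * Real.log (S / Q) - p i * Real.log (p i / q i)
          = p i * Real.log (S * q i / (Q * p i)) := by
            rw [← mul_sub]
            congr 1
            rw [Real.log_div (by positivity) (by positivity),
              Real.log_div (ne_of_gt hpi) (ne_of_gt hqi),
              Real.log_div (by positivity) (by positivity),
              Real.log_mul (ne_of_gt hS) (ne_of_gt hqi),
              Real.log_mul (ne_of_gt hQ) (ne_of_gt hpi)]
            ring
        _ ≤ p i * (S * q i / (Q * p i) - 1) := hmul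
        _ = (S / Q) * q i - p i := by field_simp
    · rw [← hpi]
      simp only [zero_mul, sub_zero, zero_sub, neg_nonpos, sub_nonneg]
      have : 0 ≤ S / Q * q i := mul_nonneg (div_nonneg hS.le hQ.le) (hq i)
      linarith
  have hsum := Finset.sum_le_sum (fun i (_ : i ∈ univ) => key i)
  rw [Finset.sum_sub_distrib, Finset.sum_sub_distrib, ← Finset.mul_sum] at hsum
  have e1 : ∑ x : ι, p x * Real.log (S / Q) = S * Real.log (S / Q) := by
    rw [← Finset.sum_mul]
  have h1 : (S / Q) * Q - S = 0 := by field_simp; ring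
  rw [e1] at hsum
  linarith

lemma mul_log_div_eq (x c : ℝ) (hx : 0 ≤ x) (hc : c ≠ 0) :
    x * Real.log (x / c) = x * Real.log x - x * Real.log c := by
  rcases hx.lt_or_eq with h | h
  · rw [Real.log_div (ne_of_gt h) hc]; ring
  · simp [← h]

/-- Per-state Gibbs upper bound: weighted soft value is at most log-sum-exp. -/
lemma state_ub {A : Type*} [Fintype A] [Nonempty A] (β : ℝ) (hβ : 0 < β)
    (pv : A → ℝ) (hp : ∀ a, 0 ≤ pv a) (q : A → ℝ) :
    ∑ a, pv a * (q a - β * Real.log (pv a / ∑ a', pv a')) ≤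
      (∑ a, pv a) * (β * Real.log (∑ a, Real.exp (q a / β))) := by
  by_cases hS : (∑ a, pv a) = 0
  · have hz : ∀ a, pv a = 0 := fun a =>
      (Finset.sum_eq_zero_iff_of_nonneg (fun i _ => hp i)).mp hS a (Finset.mem_univ a)
    simp [hz, hS]
  have hSpos : 0 < ∑ a, pv a := lt_of_le_of_ne (Finset.sum_nonneg fun i _ => hp i) (Ne.symm hS)
  have hZpos : 0 < ∑ a, Real.exp (q a / β) := Finset.sum_pos (fun a _ => Real.exp_pos _)
    ⟨Classical.arbitrary _, Finset.mem_univ _⟩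
  have hls := logsum pv (fun a => Real.exp (q a / β)) hp (fun a => (Real.exp_pos _).le)
    (fun a h => absurd h (Real.exp_ne_zero _))
  set S := ∑ a, pv a with hSdef
  set Z := ∑ a, Real.exp (q a / β) with hZdef
  have e1 : ∀ a, pv a * Real.log (pv a / Real.exp (q a / β)) =
      pv a * Real.log (pv a) - pv a * (q a / β) := by
    intro a
    rw [mul_log_div_eq _ _ (hp a) (Real.exp_ne_zero _), Real.log_exp]
  have e2 : ∀ a, pv a * Real.log (pv a / S) = pv a * Real.log (pv a) - pv a * Real.log S :=
    fun a => mul_log_div_eq _ _ (hp a) (ne_of_gt hSpos)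
  rw [Finset.sum_congr rfl (fun a _ => e1 a)] at hls
  have hls' : S * Real.log S - S * Real.log Z ≤
      (∑ a, pv a * Real.log (pv a)) - (∑ a, pv a * q a) / β := by
    rw [mul_log_div_eq _ _ hSpos.le (ne_of_gt hZpos), Finset.sum_sub_distrib] at hls
    have h2 : ∑ a, pv a * (q a / β) = (∑ a, pv a * q a) / β := by
      rw [Finset.sum_div]; exact Finset.sum_congr rfl fun a _ => by ring
    rw [h2] at hls
    linarith
  have goal_eq : ∑ a, pv a * (q a - β * Real.log (pv a / S)) =
      ∑ a, pv a * q a - β * (∑ a, pv a * Real.log (pv a)) + β * (S * Real.log S) := by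
    have hterm : ∀ a, pv a * (q a - β * Real.log (pv a / S)) =
        pv a * q a - β * (pv a * Real.log (pv a)) + β * (pv a * Real.log S) := by
      intro a; linear_combination (-β) * (e2 a)
    rw [Finset.sum_congr rfl (fun a _ => hterm a), Finset.sum_add_distrib,
      Finset.sum_sub_distrib, ← Finset.mul_sum, ← Finset.mul_sum, ← Finset.sum_mul]
    try ring
  rw [goal_eq]
  have hmul := mul_le_mul_of_nonneg_left hls' hβ.le
  have hb : β * ((∑ a, pv a * q a) / β) = ∑ a, pv a * q a := by field_simp
  nlinarith [hmul]


/-- Master identity from the flow equations. -/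
lemma master {p : ℕ} {A : Type*} [Fintype A] (T : Fin p → A → Fin p → ℝ) (γ : ℝ)
    (μ0 : Fin p → ℝ) (ρ : Fin p → A → ℝ)
    (hflow : ∀ s', ∑ a', ρ s' a' = μ0 s' + γ * ∑ s, ∑ a, T s a s' * ρ s a)
    (v : Fin p → ℝ) :
    ∑ s, μ0 s * v s =
      (∑ s, (∑ a, ρ s a) * v s) - γ * ∑ s, ∑ a, ρ s a * (∑ s', T s a s' * v s') := by
  have h1 : ∀ s, μ0 s * v s =
      (∑ a, ρ s a) * v s - γ * ((∑ s'', ∑ a, T s'' a s * ρ s'' a) * v s) := by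
    intro s
    have := hflow s
    have hμ : μ0 s = (∑ a, ρ s a) - γ * (∑ s'', ∑ a, T s'' a s * ρ s'' a) := by linarith
    rw [hμ]; ring
  rw [Finset.sum_congr rfl fun s _ => h1 s, Finset.sum_sub_distrib, ← Finset.mul_sum]
  congr 2
  calc ∑ s, (∑ s'', ∑ a, T s'' a s * ρ s'' a) * v s
      = ∑ s, ∑ s'', ∑ a, T s'' a s * ρ s'' a * v s := by
        refine Finset.sum_congr rfl fun s _ => ?_
        rw [Finset.sum_mul]
        exact Finset.sum_congr rfl fun s'' _ => by rw [Finset.sum_mul]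
    _ = ∑ s'', ∑ s, ∑ a, T s'' a s * ρ s'' a * v s := Finset.sum_comm
    _ = ∑ s'', ∑ a, ∑ s, T s'' a s * ρ s'' a * v s :=
        Finset.sum_congr rfl fun s'' _ => Finset.sum_comm
    _ = ∑ s'', ∑ a, ρ s'' a * (∑ s, T s'' a s * v s) := by
        refine Finset.sum_congr rfl fun s'' _ => Finset.sum_congr rfl fun a _ => ?_
        rw [Finset.mul_sum]
        exact Finset.sum_congr rfl fun s _ => by ring

/-- Key upper bound: any flow-feasible occupancy's regularized return is at most
the soft optimal value. -/
lemma key_ub {p n : ℕ} {A : Type*} [Fintype A] [Nonempty A]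
    (T : Fin p → A → Fin p → ℝ) (γ β : ℝ) (hβ : 0 < β)
    (r : Fin p → A → Fin n → ℝ) (μ0 : Fin p → ℝ) (θ : Fin n → ℝ) (v : Fin p → ℝ)
    (hv : v = softBellman T γ β r θ v)
    (ρ : Fin p → A → ℝ) (hρ0 : ∀ s a, 0 ≤ ρ s a)
    (hflow : ∀ s', ∑ a', ρ s' a' = μ0 s' + γ * ∑ s, ∑ a, T s a s' * ρ s a) :
    (∑ s, ∑ a, ρ s a * (∑ i, θ i * r s a i))
      - β * ∑ s, ∑ a, ρ s a * Real.log (ρ s a / ∑ a', ρ s a') ≤ ∑ s, μ0 s * v s := by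
  have hstate : ∀ s, ∑ a, ρ s a *
      ((∑ i, θ i * r s a i + γ * ∑ s', T s a s' * v s')
        - β * Real.log (ρ s a / ∑ a', ρ s a')) ≤ (∑ a, ρ s a) * v s := by
    intro s
    have h := state_ub β hβ (ρ s) (hρ0 s)
      (fun a => ∑ i, θ i * r s a i + γ * ∑ s', T s a s' * v s')
    have hvs : v s = β * Real.log (∑ a, Real.exp
        ((∑ i, θ i * r s a i + γ * ∑ s', T s a s' * v s') / β)) := congrFun hv s
    rw [hvs]
    exact h
  have hsum := Finset.sum_le_sum (fun s (_ : s ∈ Finset.univ) => hstate s)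
  have hm := master T γ μ0 ρ hflow v
  have hexp : ∀ s, ∑ a, ρ s a *
      ((∑ i, θ i * r s a i + γ * ∑ s', T s a s' * v s')
        - β * Real.log (ρ s a / ∑ a', ρ s a')) =
      (∑ a, ρ s a * (∑ i, θ i * r s a i))
      + γ * (∑ a, ρ s a * (∑ s', T s a s' * v s'))
      - β * (∑ a, ρ s a * Real.log (ρ s a / ∑ a', ρ s a')) := by
    intro s
    calc ∑ a, ρ s a * ((∑ i, θ i * r s a i + γ * ∑ s', T s a s' * v s')
          - β * Real.log (ρ s a / ∑ a', ρ s a'))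
        = ∑ a, (ρ s a * (∑ i, θ i * r s a i)
            + γ * (ρ s a * (∑ s', T s a s' * v s'))
            - β * (ρ s a * Real.log (ρ s a / ∑ a', ρ s a'))) :=
          Finset.sum_congr rfl fun a _ => by ring
      _ = _ := by
          rw [Finset.sum_sub_distrib, Finset.sum_add_distrib, ← Finset.mul_sum, ← Finset.mul_sum]
  rw [Finset.sum_congr rfl fun s _ => hexp s] at hsum
  rw [Finset.sum_sub_distrib, Finset.sum_add_distrib, ← Finset.mul_sum, ← Finset.mul_sum] at hsum
  linarith

/-- Existence of an occupancy measure achieving the soft optimal value. -/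
lemma exists_occ {p n : ℕ} {A : Type*} [Fintype A] [Nonempty A]
    (T : Fin p → A → Fin p → ℝ)
    (hT0 : ∀ s a s', 0 ≤ T s a s') (hT1 : ∀ s a, ∑ s', T s a s' = 1)
    (γ : ℝ) (hγ0 : 0 ≤ γ) (hγ1 : γ < 1) (β : ℝ) (hβ : 0 < β)
    (r : Fin p → A → Fin n → ℝ) (μ0 : Fin p → ℝ) (hμ0 : ∀ s, 0 ≤ μ0 s)
    (hμ1 : ∑ s, μ0 s = 1)
    (θ : Fin n → ℝ) (v : Fin p → ℝ) (hv : v = softBellman T γ β r θ v) :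
    ∃ ρ : Fin p → A → ℝ, (∀ s a, 0 ≤ ρ s a) ∧
      (∀ s', ∑ a', ρ s' a' = μ0 s' + γ * ∑ s, ∑ a, T s a s' * ρ s a) ∧
      (∑ s, ∑ a, ρ s a * (∑ i, θ i * r s a i))
        - β * ∑ s, ∑ a, ρ s a * Real.log (ρ s a / ∑ a', ρ s a') = ∑ s, μ0 s * v s := by
  classical
  set q : Fin p → A → ℝ := fun s a => ∑ i, θ i * r s a i + γ * ∑ s', T s a s' * v s' with hq
  set Z : Fin p → ℝ := fun s => ∑ a, Real.exp (q s a / β) with hZ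
  have hZpos : ∀ s, 0 < Z s := fun s => Finset.sum_pos (fun a _ => Real.exp_pos _)
    ⟨Classical.arbitrary _, Finset.mem_univ _⟩
  set pol : Fin p → A → ℝ := fun s a => Real.exp (q s a / β) / Z s with hpol
  have hpolpos : ∀ s a, 0 < pol s a := fun s a => div_pos (Real.exp_pos _) (hZpos s)
  have hpol1 : ∀ s, ∑ a, pol s a = 1 := by
    intro s
    rw [hpol]
    simp only
    rw [← Finset.sum_div]
    exact div_self (ne_of_gt (hZpos s))
  set P : Fin p → Fin p → ℝ := fun s s' => ∑ a, pol s a * T s a s' with hP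
  have hPpos : ∀ s s', 0 ≤ P s s' := fun s s' =>
    Finset.sum_nonneg fun a _ => mul_nonneg (hpolpos s a).le (hT0 s a s')
  have hP1 : ∀ s, ∑ s', P s s' = 1 := by
    intro s
    rw [hP]
    simp only
    rw [Finset.sum_comm]
    calc ∑ a, ∑ s', pol s a * T s a s' = ∑ a, pol s a * ∑ s', T s a s' := by
          exact Finset.sum_congr rfl fun a _ => (Finset.mul_sum _ _ _).symm
      _ = 1 := by
          rw [Finset.sum_congr rfl fun a (_ : a ∈ Finset.univ) => by rw [hT1 s a, mul_one]]
          exact hpol1 s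
  -- state marginals
  set μt : ℕ → Fin p → ℝ := fun m => Nat.rec μ0 (fun _ prev s' => ∑ s, prev s * P s s') m
    with hμt
  have hμt0 : ∀ m s, 0 ≤ μt m s := by
    intro m
    induction m with
    | zero => exact hμ0
    | succ k ih => exact fun s' => Finset.sum_nonneg fun s _ => mul_nonneg (ih s) (hPpos s s')
  have hμt1 : ∀ m, ∑ s, μt m s = 1 := by
    intro m
    induction m with
    | zero => exact hμ1
    | succ k ih =>
      calc ∑ s', ∑ s, μt k s * P s s' = ∑ s, ∑ s', μt k s * P s s' := Finset.sum_comm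
        _ = ∑ s, μt k s * ∑ s', P s s' := Finset.sum_congr rfl fun s _ => (Finset.mul_sum _ _ _).symm
        _ = 1 := by
            rw [Finset.sum_congr rfl fun s (_ : s ∈ Finset.univ) => by rw [hP1 s, mul_one]]
            exact ih
  have hμtle : ∀ m s, μt m s ≤ 1 := by
    intro m s
    calc μt m s ≤ ∑ s', μt m s' := Finset.single_le_sum (fun s' _ => hμt0 m s') (Finset.mem_univ s)
      _ = 1 := hμt1 m
  have hsummable : ∀ s, Summable (fun m => γ ^ m * μt m s) := by
    intro s
    apply Summable.of_nonneg_of_le (fun m => mul_nonneg (pow_nonneg hγ0 m) (hμt0 m s))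
      (fun m => ?_) (summable_geometric_of_lt_one hγ0 hγ1)
    calc γ ^ m * μt m s ≤ γ ^ m * 1 :=
          mul_le_mul_of_nonneg_left (hμtle m s) (pow_nonneg hγ0 m)
      _ = γ ^ m := mul_one _
  set d : Fin p → ℝ := fun s => ∑' m, γ ^ m * μt m s with hd
  have hd0 : ∀ s, 0 ≤ d s := fun s =>
    tsum_nonneg fun m => mul_nonneg (pow_nonneg hγ0 m) (hμt0 m s)
  have hdflow : ∀ s', d s' = μ0 s' + γ * ∑ s, d s * P s s' := by
    intro s'
    rw [hd]
    simp only
    rw [(hsummable s').tsum_eq_zero_add]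
    congr 1
    · simp [hμt]
    · have hstep : ∀ m : ℕ, γ ^ (m + 1) * μt (m + 1) s' =
          ∑ s, γ * ((γ ^ m * μt m s) * P s s') := by
        intro m
        have : μt (m + 1) s' = ∑ s, μt m s * P s s' := rfl
        rw [this, Finset.mul_sum]
        exact Finset.sum_congr rfl fun s _ => by ring
      rw [tsum_congr hstep]
      rw [Summable.tsum_finsetSum (fun s _ => ((hsummable s).mul_right (P s s')).mul_left γ)]
      rw [Finset.mul_sum]
      exact Finset.sum_congr rfl fun s _ => by
        rw [tsum_mul_left, tsum_mul_right]
  refine ⟨fun s a => d s * pol s a, fun s a => mul_nonneg (hd0 s) (hpolpos s a).le, ?_, ?_⟩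
  · intro s'
    have hrow : ∑ a', d s' * pol s' a' = d s' := by
      rw [← Finset.mul_sum, hpol1, mul_one]
    rw [hrow, hdflow s']
    congr 1
    congr 1
    refine Finset.sum_congr rfl fun s _ => ?_
    rw [hP]
    simp only
    rw [Finset.mul_sum]
    exact Finset.sum_congr rfl fun a _ => by ring
  · -- the value identity
    have hrow : ∀ s, ∑ a', d s * pol s a' = d s := by
      intro s; rw [← Finset.mul_sum, hpol1, mul_one]
    have hvs : ∀ s, v s = β * Real.log (Z s) := fun s => congrFun hv s
    have hstate : ∀ s, ∑ a, (d s * pol s a) *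
        (q s a - β * Real.log ((d s * pol s a) / ∑ a', d s * pol s a')) = d s * v s := by
      intro s
      rcases (hd0 s).lt_or_eq with hds | hds
      · have hterm : ∀ a, (d s * pol s a) *
            (q s a - β * Real.log ((d s * pol s a) / ∑ a', d s * pol s a')) =
            (d s * pol s a) * v s := by
          intro a
          congr 1
          rw [hrow s]
          rw [mul_div_cancel_left₀ _ (ne_of_gt hds)]
          · rw [hpol]
            simp only
            rw [Real.log_div (Real.exp_ne_zero _) (ne_of_gt (hZpos s)), Real.log_exp, hvs s]
            field_simp
            ring
        rw [Finset.sum_congr rfl fun a _ => hterm a, ← Finset.sum_mul, hrow s]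
      · rw [← hds]
        simp
    -- combine with master identity
    have hm := master T γ μ0 (fun s a => d s * pol s a) ?flow v
    case flow =>
      intro s'
      have hrow' : ∑ a', d s' * pol s' a' = d s' := hrow s'
      rw [hrow', hdflow s']
      congr 1
      congr 1
      refine Finset.sum_congr rfl fun s _ => ?_
      rw [hP]
      simp only
      rw [Finset.mul_sum]
      exact Finset.sum_congr rfl fun a _ => by ring
    have hexp : ∀ s, ∑ a, (d s * pol s a) * (q s a - β * Real.log ((d s * pol s a) / ∑ a', d s * pol s a')) =
        (∑ a, (d s * pol s a) * (∑ i, θ i * r s a i))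
        + γ * (∑ a, (d s * pol s a) * (∑ s', T s a s' * v s'))
        - β * (∑ a, (d s * pol s a) * Real.log ((d s * pol s a) / ∑ a', d s * pol s a')) := by
      intro s
      calc ∑ a, (d s * pol s a) * (q s a - β * Real.log ((d s * pol s a) / ∑ a', d s * pol s a'))
          = ∑ a, ((d s * pol s a) * (∑ i, θ i * r s a i)
              + γ * ((d s * pol s a) * (∑ s', T s a s' * v s'))
              - β * ((d s * pol s a) * Real.log ((d s * pol s a) / ∑ a', d s * pol s a'))) :=
            Finset.sum_congr rfl fun a _ => by rw [hq]; simp only; ring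
        _ = _ := by
            rw [Finset.sum_sub_distrib, Finset.sum_add_distrib, ← Finset.mul_sum, ← Finset.mul_sum]
    have hsum : ∑ s, ((∑ a, (d s * pol s a) * (∑ i, θ i * r s a i))
        + γ * (∑ a, (d s * pol s a) * (∑ s', T s a s' * v s'))
        - β * (∑ a, (d s * pol s a) * Real.log ((d s * pol s a) / ∑ a', d s * pol s a')))
        = ∑ s, d s * v s := by
      rw [← Finset.sum_congr rfl fun s _ => hexp s]
      exact Finset.sum_congr rfl fun s _ => hstate s
    rw [Finset.sum_sub_distrib, Finset.sum_add_distrib, ← Finset.mul_sum, ← Finset.mul_sum] at hsum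
    have hm' : ∑ s, μ0 s * v s = (∑ s, d s * v s)
        - γ * ∑ s, ∑ a, (d s * pol s a) * (∑ s', T s a s' * v s') := by
      rw [hm]
      congr 1
      exact Finset.sum_congr rfl fun s _ => by rw [hrow s]
    linarith

/-- Convexity (two-point) of the conditional entropy term. -/
lemma ent_conv {p : ℕ} {A : Type*} [Fintype A] (ρ1 ρ2 : Fin p → A → ℝ)
    (h1 : ∀ s a, 0 ≤ ρ1 s a) (h2 : ∀ s a, 0 ≤ ρ2 s a)
    (a b : ℝ) (ha : 0 ≤ a) (hb : 0 ≤ b) :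
    ∑ s, ∑ c, (a * ρ1 s c + b * ρ2 s c) *
        Real.log ((a * ρ1 s c + b * ρ2 s c) / ∑ a', (a * ρ1 s a' + b * ρ2 s a')) ≤
      a * (∑ s, ∑ c, ρ1 s c * Real.log (ρ1 s c / ∑ a', ρ1 s a'))
      + b * (∑ s, ∑ c, ρ2 s c * Real.log (ρ2 s c / ∑ a', ρ2 s a')) := by
  rw [Finset.mul_sum, Finset.mul_sum, ← Finset.sum_add_distrib]
  refine Finset.sum_le_sum fun s _ => ?_
  rw [Finset.mul_sum, Finset.mul_sum, ← Finset.sum_add_distrib]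
  refine Finset.sum_le_sum fun c _ => ?_
  have hrow : ∑ a', (a * ρ1 s a' + b * ρ2 s a') =
      a * (∑ a', ρ1 s a') + b * (∑ a', ρ2 s a') := by
    rw [Finset.sum_add_distrib, ← Finset.mul_sum, ← Finset.mul_sum]
  rw [hrow]
  set S1 := ∑ a', ρ1 s a' with hS1
  set S2 := ∑ a', ρ2 s a' with hS2
  have hS1nn : 0 ≤ S1 := Finset.sum_nonneg fun a' _ => h1 s a'
  have hS2nn : 0 ≤ S2 := Finset.sum_nonneg fun a' _ => h2 s a'
  have hle1 : ρ1 s c ≤ S1 := Finset.single_le_sum (fun a' _ => h1 s a') (Finset.mem_univ c)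
  have hle2 : ρ2 s c ≤ S2 := Finset.single_le_sum (fun a' _ => h2 s a') (Finset.mem_univ c)
  have hls := logsum (ι := Fin 2) ![a * ρ1 s c, b * ρ2 s c] ![a * S1, b * S2]
    (fun i => by fin_cases i <;> simp <;> [exact mul_nonneg ha (h1 s c); exact mul_nonneg hb (h2 s c)])
    (fun i => by fin_cases i <;> simp <;> [exact mul_nonneg ha hS1nn; exact mul_nonneg hb hS2nn])
    (fun i => by
      fin_cases i <;> simp only [Matrix.cons_val_zero, Matrix.cons_val_one, Matrix.head_cons] <;>
        intro h
      · rcases mul_eq_zero.mp h with h' | h'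
        · simp [h']
        · have h'' : ρ1 s c = 0 := le_antisymm (h' ▸ hle1) (h1 s c)
          simp [h'']
      · rcases mul_eq_zero.mp h with h' | h'
        · simp [h']
        · have h'' : ρ2 s c = 0 := le_antisymm (h' ▸ hle2) (h2 s c)
          simp [h''])
  rw [Fin.sum_univ_two, Fin.sum_univ_two, Fin.sum_univ_two] at hls
  simp only [Matrix.cons_val_zero, Matrix.cons_val_one, Matrix.head_cons] at hls
  have e1 : a * ρ1 s c * Real.log (a * ρ1 s c / (a * S1)) = a * (ρ1 s c * Real.log (ρ1 s c / S1)) := by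
    rcases ha.lt_or_eq with h | h
    · rw [mul_div_mul_left _ _ (ne_of_gt h)]; ring
    · rw [← h]; ring
  have e2 : b * ρ2 s c * Real.log (b * ρ2 s c / (b * S2)) = b * (ρ2 s c * Real.log (ρ2 s c / S2)) := by
    rcases hb.lt_or_eq with h | h
    · rw [mul_div_mul_left _ _ (ne_of_gt h)]; ring
    · rw [← h]; ring
  rw [e1, e2] at hls
  exact hls

lemma split_obj {p L K : ℕ} {A : Type*} [Fintype A]
    (r : Fin p → A → Fin (L + K) → ℝ) (ρ : Fin p → A → ℝ) (u : Fin L → ℝ) (w : Fin K → ℝ) :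
    ∑ s, ∑ a, ρ s a * (∑ i, Fin.append u w i * r s a i) =
      (∑ l, u l * ∑ s, ∑ a, r s a (Fin.castAdd K l) * ρ s a)
      + (∑ k, w k * ∑ s, ∑ a, r s a (Fin.natAdd L k) * ρ s a) := by
  have h1 : ∑ s, ∑ a, ρ s a * (∑ i, Fin.append u w i * r s a i) =
      ∑ i, Fin.append u w i * (∑ s, ∑ a, r s a i * ρ s a) := by
    calc ∑ s, ∑ a, ρ s a * (∑ i, Fin.append u w i * r s a i)
        = ∑ s, ∑ a, ∑ i, Fin.append u w i * (r s a i * ρ s a) := by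
          refine Finset.sum_congr rfl fun s _ => Finset.sum_congr rfl fun a _ => ?_
          rw [Finset.mul_sum]
          exact Finset.sum_congr rfl fun i _ => by ring
      _ = ∑ s, ∑ i, ∑ a, Fin.append u w i * (r s a i * ρ s a) :=
          Finset.sum_congr rfl fun s _ => Finset.sum_comm
      _ = ∑ i, ∑ s, ∑ a, Fin.append u w i * (r s a i * ρ s a) := Finset.sum_comm
      _ = ∑ i, Fin.append u w i * (∑ s, ∑ a, r s a i * ρ s a) := by
          refine Finset.sum_congr rfl fun i _ => ?_
          rw [Finset.mul_sum]
          exact Finset.sum_congr rfl fun s _ => (Finset.mul_sum _ _ _).symm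
  rw [h1, Fin.sum_univ_add]
  congr 1
  · exact Finset.sum_congr rfl fun l _ => by rw [Fin.append_left]
  · exact Finset.sum_congr rfl fun k _ => by rw [Fin.append_right]

/-- Weak duality. -/
lemma weak_dual {p L K : ℕ} (hK : 1 ≤ K) {A : Type*} [Fintype A] [Nonempty A]
    (T : Fin p → A → Fin p → ℝ) (γ β : ℝ) (hβ : 0 < β)
    (r : Fin p → A → Fin (L + K) → ℝ) (μ0 : Fin p → ℝ) (C : Fin L → ℝ)
    (V : (Fin (L + K) → ℝ) → Fin p → ℝ)
    (hV : ∀ θ, V θ = softBellman T γ β r θ (V θ))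
    (ρ : Fin p → A → ℝ) (hρ0 : ∀ s a, 0 ≤ ρ s a)
    (hflow : ∀ s', ∑ a', ρ s' a' = μ0 s' + γ * ∑ s, ∑ a, T s a s' * ρ s a)
    (hcon : ∀ l : Fin L, C l ≤ ∑ s, ∑ a, r s a (Fin.castAdd K l) * ρ s a)
    (u : Fin L → ℝ) (w : Fin K → ℝ) (hu : ∀ l, 0 ≤ u l) (hw0 : ∀ k, 0 ≤ w k)
    (hw1 : ∑ k, w k = 1) :
    (Finset.univ.inf' (Finset.univ_nonempty_iff.mpr (Fin.pos_iff_nonempty.mp hK))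
        (fun k : Fin K => ∑ s, ∑ a, r s a (Fin.natAdd L k) * ρ s a))
      - β * ∑ s, ∑ a, ρ s a * Real.log (ρ s a / ∑ a', ρ s a')
    ≤ ∑ s, μ0 s * V (Fin.append u w) s - ∑ l, u l * C l := by
  set θ : Fin (L + K) → ℝ := Fin.append u w with hθ
  have hkey := key_ub T γ β hβ r μ0 θ (V θ) (hV θ) ρ hρ0 hflow
  rw [split_obj r ρ u w] at hkey
  have h1 : (Finset.univ.inf' (Finset.univ_nonempty_iff.mpr (Fin.pos_iff_nonempty.mp hK))
      (fun k : Fin K => ∑ s, ∑ a, r s a (Fin.natAdd L k) * ρ s a)) ≤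
      ∑ k, w k * ∑ s, ∑ a, r s a (Fin.natAdd L k) * ρ s a := by
    set I := (Finset.univ.inf' (Finset.univ_nonempty_iff.mpr (Fin.pos_iff_nonempty.mp hK))
      (fun k : Fin K => ∑ s, ∑ a, r s a (Fin.natAdd L k) * ρ s a)) with hI
    calc I = ∑ k, w k * I := by rw [← Finset.sum_mul, hw1, one_mul]
      _ ≤ ∑ k, w k * ∑ s, ∑ a, r s a (Fin.natAdd L k) * ρ s a := by
          refine Finset.sum_le_sum fun k _ => mul_le_mul_of_nonneg_left ?_ (hw0 k)
          exact Finset.inf'_le _ (Finset.mem_univ k)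
  have h2 : ∑ l, u l * C l ≤ ∑ l, u l * ∑ s, ∑ a, r s a (Fin.castAdd K l) * ρ s a :=
    Finset.sum_le_sum fun l _ => mul_le_mul_of_nonneg_left (hcon l) (hu l)
  linarith
set_option maxHeartbeats 2000000 in
/-- Strong duality for constrained entropy-regularized max-min MORL (Proposition 3.2).
The reward vector `r : S × A → ℝ^{L+K}` has constraint rewards `c^{(l)} = r (castAdd K l)`
in its first `L` components and objective rewards `r^{(k)} = r (natAdd L k)` in its last
`K` components.  Under strict feasibility of some occupancy measure `ρbar`, the optimal
value of the primal problem (maximizing the entropy-regularized minimum objective return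
over nonnegative `ρ` satisfying the Bellman flow equations and the `L` constraints)
equals the infimum over `u ∈ ℝ₊^L` and `w ∈ Δ^K` of
`L(u,w) = Σ_s μ0(s) v*_{(u,w)}(s) − Σ_l u_l C_l`, where `v*_{(u,w)} = V (Fin.append u w)`
is the unique fixed point of the soft Bellman operator. -/
theorem stmt_4 {p L K : ℕ} (hK : 1 ≤ K) {A : Type*} [Fintype A] [Nonempty A]
    (T : Fin p → A → Fin p → ℝ)
    (hT0 : ∀ s a s', 0 ≤ T s a s') (hT1 : ∀ s a, ∑ s', T s a s' = 1)
    (γ : ℝ) (hγ0 : 0 ≤ γ) (hγ1 : γ < 1)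
    (β : ℝ) (hβ : 0 < β)
    (r : Fin p → A → Fin (L + K) → ℝ)
    (μ0 : Fin p → ℝ) (hμ0 : ∀ s, 0 ≤ μ0 s) (hμ1 : ∑ s, μ0 s = 1)
    (C : Fin L → ℝ)
    (V : (Fin (L + K) → ℝ) → Fin p → ℝ)
    (hV : ∀ θ, V θ = softBellman T γ β r θ (V θ))
    -- strict feasibility (Slater condition)
    (ρbar : Fin p → A → ℝ)
    (hρbar_pos : ∀ s a, 0 < ρbar s a)
    (hρbar_flow : ∀ s', ∑ a', ρbar s' a' = μ0 s' + γ * ∑ s, ∑ a, T s a s' * ρbar s a)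
    (hρbar_con : ∀ l : Fin L, C l < ∑ s, ∑ a, r s a (Fin.castAdd K l) * ρbar s a) :
    sSup {val : ℝ | ∃ ρ : Fin p → A → ℝ,
        (∀ s a, 0 ≤ ρ s a) ∧
        (∀ s', ∑ a', ρ s' a' = μ0 s' + γ * ∑ s, ∑ a, T s a s' * ρ s a) ∧
        (∀ l : Fin L, C l ≤ ∑ s, ∑ a, r s a (Fin.castAdd K l) * ρ s a) ∧
        val = (Finset.univ.inf' (Finset.univ_nonempty_iff.mpr (Fin.pos_iff_nonempty.mp hK))
                (fun k : Fin K => ∑ s, ∑ a, r s a (Fin.natAdd L k) * ρ s a))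
              - β * ∑ s, ∑ a, ρ s a * Real.log (ρ s a / ∑ a', ρ s a')}
      = sInf {val : ℝ | ∃ (u : Fin L → ℝ) (w : Fin K → ℝ),
        (∀ l, 0 ≤ u l) ∧ (∀ k, 0 ≤ w k) ∧ (∑ k, w k = 1) ∧
        val = ∑ s, μ0 s * V (Fin.append u w) s - ∑ l, u l * C l} := by
  classical
  have hKpos : (0:ℝ) < (K:ℝ) := by exact_mod_cast Nat.lt_of_lt_of_le Nat.zero_lt_one hK
  set Pset : Set ℝ := {val : ℝ | ∃ ρ : Fin p → A → ℝ,
        (∀ s a, 0 ≤ ρ s a) ∧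
        (∀ s', ∑ a', ρ s' a' = μ0 s' + γ * ∑ s, ∑ a, T s a s' * ρ s a) ∧
        (∀ l : Fin L, C l ≤ ∑ s, ∑ a, r s a (Fin.castAdd K l) * ρ s a) ∧
        val = (Finset.univ.inf' (Finset.univ_nonempty_iff.mpr (Fin.pos_iff_nonempty.mp hK))
                (fun k : Fin K => ∑ s, ∑ a, r s a (Fin.natAdd L k) * ρ s a))
              - β * ∑ s, ∑ a, ρ s a * Real.log (ρ s a / ∑ a', ρ s a')} with hPdef
  set Dset : Set ℝ := {val : ℝ | ∃ (u : Fin L → ℝ) (w : Fin K → ℝ),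
        (∀ l, 0 ≤ u l) ∧ (∀ k, 0 ≤ w k) ∧ (∑ k, w k = 1) ∧
        val = ∑ s, μ0 s * V (Fin.append u w) s - ∑ l, u l * C l} with hDdef
  have hPmem : ((Finset.univ.inf' (Finset.univ_nonempty_iff.mpr (Fin.pos_iff_nonempty.mp hK))
      (fun k : Fin K => ∑ s, ∑ a, r s a (Fin.natAdd L k) * ρbar s a))
      - β * ∑ s, ∑ a, ρbar s a * Real.log (ρbar s a / ∑ a', ρbar s a')) ∈ Pset :=
    ⟨ρbar, fun s a => (hρbar_pos s a).le, hρbar_flow, fun l => (hρbar_con l).le, rfl⟩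
  have hPne : Pset.Nonempty := ⟨_, hPmem⟩
  have hw1unif : (∑ _k : Fin K, ((K:ℝ))⁻¹) = 1 := by
    rw [Finset.sum_const, Finset.card_univ, Fintype.card_fin, nsmul_eq_mul]
    field_simp
  have hDmem : (∑ s, μ0 s * V (Fin.append (fun _ => 0) (fun _ => ((K:ℝ))⁻¹)) s
      - ∑ l, (fun _ : Fin L => (0:ℝ)) l * C l) ∈ Dset :=
    ⟨fun _ => 0, fun _ => ((K:ℝ))⁻¹, fun _ => le_refl 0,
      fun _ => by positivity, hw1unif, rfl⟩
  have hDne : Dset.Nonempty := ⟨_, hDmem⟩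
  have hweak : ∀ x ∈ Pset, ∀ y ∈ Dset, x ≤ y := by
    rintro x ⟨ρ, h0, hf, hc, rfl⟩ y ⟨u, w, hu, hw0, hw1, rfl⟩
    exact weak_dual hK T γ β hβ r μ0 C V hV ρ h0 hf hc u w hu hw0 hw1
  have hbddA : BddAbove Pset := ⟨_, fun x hx => hweak x hx _ hDmem⟩
  have hbddB : BddBelow Dset := ⟨_, fun y hy => hweak _ hPmem y hy⟩
  refine le_antisymm (csSup_le hPne fun x hx => le_csInf hDne fun y hy => hweak x hx y hy) ?_
  set pstar := sSup Pset with hpstar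
  set Sset : Set ((Fin L → ℝ) × (Fin K → ℝ) × ℝ) := {z |
      ∃ ρ : Fin p → A → ℝ, ∃ t : ℝ, (∀ s a, 0 ≤ ρ s a) ∧
        (∀ s', ∑ a', ρ s' a' = μ0 s' + γ * ∑ s, ∑ a, T s a s' * ρ s a) ∧
        (∀ l, z.1 l < (∑ s, ∑ a, r s a (Fin.castAdd K l) * ρ s a) - C l) ∧
        (∀ k, z.2.1 k < (∑ s, ∑ a, r s a (Fin.natAdd L k) * ρ s a) - t) ∧
        z.2.2 < t - β * ∑ s, ∑ a, ρ s a * Real.log (ρ s a / ∑ a', ρ s a')} with hSdef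
  set Tset : Set ((Fin L → ℝ) × (Fin K → ℝ) × ℝ) :=
    {z | z.1 = 0 ∧ z.2.1 = 0 ∧ pstar ≤ z.2.2} with hTdef
  have hSconv : Convex ℝ Sset := by
    rintro z1 ⟨ρ1, t1, h01, hf1, hc1, hr1, he1⟩ z2 ⟨ρ2, t2, h02, hf2, hc2, hr2, he2⟩
      a b ha hb hab
    have combo : ∀ x1 y1 x2 y2 : ℝ, x1 < y1 → x2 < y2 →
        a * x1 + b * x2 < a * y1 + b * y2 := by
      intro x1 y1 x2 y2 h1 h2
      rcases ha.lt_or_eq with ha' | ha'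
      · have k1 := mul_lt_mul_of_pos_left h1 ha'
        have k2 := mul_le_mul_of_nonneg_left h2.le hb
        linarith
      · have hb1 : b = 1 := by linarith
        rw [← ha', hb1]; simpa using h2
    have hlinw : ∀ g : Fin p → A → ℝ,
        ∑ s, ∑ c, g s c * (a * ρ1 s c + b * ρ2 s c) =
          a * (∑ s, ∑ c, g s c * ρ1 s c) + b * (∑ s, ∑ c, g s c * ρ2 s c) := by
      intro g
      rw [Finset.mul_sum, Finset.mul_sum, ← Finset.sum_add_distrib]
      refine Finset.sum_congr rfl fun s _ => ?_
      rw [Finset.mul_sum, Finset.mul_sum, ← Finset.sum_add_distrib]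
      exact Finset.sum_congr rfl fun cc _ => by ring
    refine ⟨fun s cc => a * ρ1 s cc + b * ρ2 s cc, a * t1 + b * t2,
      fun s cc => add_nonneg (mul_nonneg ha (h01 s cc)) (mul_nonneg hb (h02 s cc)), ?_, ?_, ?_, ?_⟩
    · intro s'
      have e1 : ∑ a', (a * ρ1 s' a' + b * ρ2 s' a') =
          a * (∑ a', ρ1 s' a') + b * (∑ a', ρ2 s' a') := by
        rw [Finset.sum_add_distrib, ← Finset.mul_sum, ← Finset.mul_sum]
      have e2 : ∑ s, ∑ cc, T s cc s' * (a * ρ1 s cc + b * ρ2 s cc) =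
          a * (∑ s, ∑ cc, T s cc s' * ρ1 s cc) + b * (∑ s, ∑ cc, T s cc s' * ρ2 s cc) :=
        hlinw _
      rw [e1, hf1 s', hf2 s', e2]
      have hab' : a + b = 1 := hab
      linear_combination (μ0 s') * hab'
    · intro l
      have e : ∑ s, ∑ cc, r s cc (Fin.castAdd K l) * (a * ρ1 s cc + b * ρ2 s cc) =
          a * (∑ s, ∑ cc, r s cc (Fin.castAdd K l) * ρ1 s cc)
          + b * (∑ s, ∑ cc, r s cc (Fin.castAdd K l) * ρ2 s cc) := hlinw _
      have hz : (a • z1 + b • z2).1 l = a * z1.1 l + b * z2.1 l := by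
        simp [Prod.fst_add, Prod.smul_fst, smul_eq_mul]
      rw [hz, e]
      have hcc := combo _ _ _ _ (hc1 l) (hc2 l)
      have hab' : a + b = 1 := hab
      have e3 : a * ((∑ s, ∑ cc, r s cc (Fin.castAdd K l) * ρ1 s cc) - C l)
          + b * ((∑ s, ∑ cc, r s cc (Fin.castAdd K l) * ρ2 s cc) - C l)
          = a * (∑ s, ∑ cc, r s cc (Fin.castAdd K l) * ρ1 s cc)
          + b * (∑ s, ∑ cc, r s cc (Fin.castAdd K l) * ρ2 s cc) - C l := by
        linear_combination (-(C l)) * hab'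
      linarith [hcc, e3]
    · intro k
      have e : ∑ s, ∑ cc, r s cc (Fin.natAdd L k) * (a * ρ1 s cc + b * ρ2 s cc) =
          a * (∑ s, ∑ cc, r s cc (Fin.natAdd L k) * ρ1 s cc)
          + b * (∑ s, ∑ cc, r s cc (Fin.natAdd L k) * ρ2 s cc) := hlinw _
      have hz : (a • z1 + b • z2).2.1 k = a * z1.2.1 k + b * z2.2.1 k := by
        simp [Prod.snd_add, Prod.fst_add, Prod.smul_snd, Prod.smul_fst, smul_eq_mul]
      rw [hz, e]
      have hcc := combo _ _ _ _ (hr1 k) (hr2 k)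
      have e3 : a * ((∑ s, ∑ cc, r s cc (Fin.natAdd L k) * ρ1 s cc) - t1)
          + b * ((∑ s, ∑ cc, r s cc (Fin.natAdd L k) * ρ2 s cc) - t2)
          = a * (∑ s, ∑ cc, r s cc (Fin.natAdd L k) * ρ1 s cc)
          + b * (∑ s, ∑ cc, r s cc (Fin.natAdd L k) * ρ2 s cc) - (a * t1 + b * t2) := by
        ring
      linarith [hcc, e3]
    · have hz : (a • z1 + b • z2).2.2 = a * z1.2.2 + b * z2.2.2 := by
        simp [Prod.snd_add, Prod.smul_snd, smul_eq_mul]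
      have hent := ent_conv ρ1 ρ2 h01 h02 a b ha hb
      have hcc := combo _ _ _ _ he1 he2
      rw [hz]
      have hent' := mul_le_mul_of_nonneg_left hent hβ.le
      have e3 : a * (t1 - β * ∑ s, ∑ cc, ρ1 s cc * Real.log (ρ1 s cc / ∑ a', ρ1 s a'))
          + b * (t2 - β * ∑ s, ∑ cc, ρ2 s cc * Real.log (ρ2 s cc / ∑ a', ρ2 s a'))
          = a * t1 + b * t2
            - β * (a * (∑ s, ∑ cc, ρ1 s cc * Real.log (ρ1 s cc / ∑ a', ρ1 s a'))
              + b * (∑ s, ∑ cc, ρ2 s cc * Real.log (ρ2 s cc / ∑ a', ρ2 s a'))) := by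
        ring
      linarith [hcc, e3, hent']
  have hSopen : IsOpen Sset := by
    have hrw : Sset = ⋃ (x : (Fin p → A → ℝ) × ℝ), ⋃ (_ : (∀ s a, 0 ≤ x.1 s a) ∧
        (∀ s', ∑ a', x.1 s' a' = μ0 s' + γ * ∑ s, ∑ a, T s a s' * x.1 s a)),
        ((⋂ l, {z : (Fin L → ℝ) × (Fin K → ℝ) × ℝ |
            z.1 l < (∑ s, ∑ a, r s a (Fin.castAdd K l) * x.1 s a) - C l}) ∩
         ((⋂ k, {z : (Fin L → ℝ) × (Fin K → ℝ) × ℝ |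
            z.2.1 k < (∑ s, ∑ a, r s a (Fin.natAdd L k) * x.1 s a) - x.2}) ∩
          {z : (Fin L → ℝ) × (Fin K → ℝ) × ℝ |
            z.2.2 < x.2 - β * ∑ s, ∑ a, x.1 s a * Real.log (x.1 s a / ∑ a', x.1 s a')})) := by
      ext z
      simp only [hSdef, Set.mem_setOf_eq, Set.mem_iUnion, Set.mem_inter_iff, Set.mem_iInter,
        Set.mem_setOf_eq]
      constructor
      · rintro ⟨ρ, t, h0, hf, hc, hr, he⟩
        exact ⟨(ρ, t), ⟨h0, hf⟩, hc, hr, he⟩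
      · rintro ⟨⟨ρ, t⟩, ⟨h0, hf⟩, hc, hr, he⟩
        exact ⟨ρ, t, h0, hf, hc, hr, he⟩
    rw [hrw]
    refine isOpen_iUnion fun x => isOpen_iUnion fun _ => ?_
    refine IsOpen.inter ?_ (IsOpen.inter ?_ ?_)
    · exact isOpen_iInter_of_finite fun l =>
        isOpen_lt ((continuous_apply l).comp continuous_fst) continuous_const
    · exact isOpen_iInter_of_finite fun k =>
        isOpen_lt ((continuous_apply k).comp (continuous_fst.comp continuous_snd)) continuous_const
    · exact isOpen_lt (continuous_snd.comp continuous_snd) continuous_const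
  have hTconv : Convex ℝ Tset := by
    rintro z1 ⟨h11, h12, h13⟩ z2 ⟨h21, h22, h23⟩ a b ha hb hab
    refine ⟨?_, ?_, ?_⟩
    · show (a • z1 + b • z2).1 = 0
      rw [Prod.fst_add, Prod.smul_fst, Prod.smul_fst, h11, h21, smul_zero, smul_zero, add_zero]
    · show (a • z1 + b • z2).2.1 = 0
      rw [Prod.snd_add, Prod.smul_snd, Prod.smul_snd, Prod.fst_add, Prod.smul_fst, Prod.smul_fst,
        h12, h22, smul_zero, smul_zero, add_zero]
    · show pstar ≤ (a • z1 + b • z2).2.2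
      have hz : (a • z1 + b • z2).2.2 = a * z1.2.2 + b * z2.2.2 := by
        simp [Prod.snd_add, Prod.smul_snd, smul_eq_mul]
      rw [hz]
      calc pstar = a * pstar + b * pstar := by rw [← add_mul, hab, one_mul]
        _ ≤ a * z1.2.2 + b * z2.2.2 :=
            add_le_add (mul_le_mul_of_nonneg_left h13 ha) (mul_le_mul_of_nonneg_left h23 hb)
  have hdisj : Disjoint Sset Tset := by
    rw [Set.disjoint_left]
    rintro z ⟨ρ, t, h0, hf, hc, hr, he⟩ ⟨hz1, hz2, hz3⟩
    have hc' : ∀ l : Fin L, C l ≤ ∑ s, ∑ a, r s a (Fin.castAdd K l) * ρ s a := by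
      intro l
      have h := hc l
      rw [hz1] at h
      simp only [Pi.zero_apply] at h
      linarith
    have hmem : ((Finset.univ.inf' (Finset.univ_nonempty_iff.mpr (Fin.pos_iff_nonempty.mp hK))
        (fun k : Fin K => ∑ s, ∑ a, r s a (Fin.natAdd L k) * ρ s a))
        - β * ∑ s, ∑ a, ρ s a * Real.log (ρ s a / ∑ a', ρ s a')) ∈ Pset :=
      ⟨ρ, h0, hf, hc', rfl⟩
    have hle := le_csSup hbddA hmem
    have htle : t ≤ Finset.univ.inf' (Finset.univ_nonempty_iff.mpr (Fin.pos_iff_nonempty.mp hK))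
        (fun k : Fin K => ∑ s, ∑ a, r s a (Fin.natAdd L k) * ρ s a) := by
      refine Finset.le_inf' _ _ fun k _ => ?_
      have h := hr k
      rw [hz2] at h
      simp only [Pi.zero_apply] at h
      linarith
    linarith
  obtain ⟨f, c, hfs, hft⟩ := geometric_hahn_banach_open hSconv hSopen hTconv hdisj
  set uu : Fin L → ℝ := fun l => f ((fun j => if l = j then 1 else 0), 0, 0) with huu
  set ww : Fin K → ℝ := fun k => f (0, (fun j => if k = j then 1 else 0), 0) with hww
  set lam : ℝ := f (0, 0, 1) with hlamdef
  have hexp : ∀ z : (Fin L → ℝ) × (Fin K → ℝ) × ℝ,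
      f z = ∑ l, z.1 l * uu l + (∑ k, z.2.1 k * ww k + z.2.2 * lam) := by
    intro z
    have hz : z = (∑ l, z.1 l • (((fun j => if l = j then (1:ℝ) else 0) : Fin L → ℝ),
          (0 : Fin K → ℝ), (0:ℝ)))
        + ((∑ k, z.2.1 k • ((0 : Fin L → ℝ),
            ((fun j => if k = j then (1:ℝ) else 0) : Fin K → ℝ), (0:ℝ)))
        + z.2.2 • ((0 : Fin L → ℝ), (0 : Fin K → ℝ), (1:ℝ))) := by
      refine Prod.ext ?_ (Prod.ext ?_ ?_)
      · simp only [Prod.fst_add, Prod.fst_sum, Prod.smul_fst, smul_zero, Finset.sum_const_zero,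
          add_zero, zero_add]
        exact pi_eq_sum_univ z.1
      · simp only [Prod.snd_add, Prod.fst_add, Prod.snd_sum, Prod.fst_sum, Prod.smul_snd,
          Prod.smul_fst, smul_zero, Finset.sum_const_zero, add_zero, zero_add]
        exact pi_eq_sum_univ z.2.1
      · simp only [Prod.snd_add, Prod.snd_sum, Prod.smul_snd, smul_zero, Finset.sum_const_zero,
          smul_eq_mul, mul_one, zero_add, add_zero]
        simp
    conv_lhs => rw [hz]
    rw [map_add, map_add, map_sum, map_sum, map_smul, smul_eq_mul]
    congr 1
    · exact Finset.sum_congr rfl fun l _ => by rw [map_smul, smul_eq_mul]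
    · congr 1
      exact Finset.sum_congr rfl fun k _ => by rw [map_smul, smul_eq_mul]
  set Cbar : Fin L → ℝ := fun l => ∑ s, ∑ a, r s a (Fin.castAdd K l) * ρbar s a with hCbar
  set Rbar : Fin K → ℝ := fun k => ∑ s, ∑ a, r s a (Fin.natAdd L k) * ρbar s a with hRbar
  set Ebar : ℝ := ∑ s, ∑ a, ρbar s a * Real.log (ρbar s a / ∑ a', ρbar s a') with hEbar
  set tbar : ℝ := (Finset.univ.inf' (Finset.univ_nonempty_iff.mpr (Fin.pos_iff_nonempty.mp hK))
      Rbar) - 1 with htbardef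
  have htbarlt : ∀ k, tbar < Rbar k := by
    intro k
    have h := Finset.inf'_le Rbar (Finset.mem_univ k)
    rw [htbardef]
    linarith
  set z0 : (Fin L → ℝ) × (Fin K → ℝ) × ℝ :=
    ((fun l => Cbar l - C l - 1), (fun k => Rbar k - tbar - 1), (tbar - β * Ebar - 1)) with hz0def
  have hz0 : z0 ∈ Sset := by
    refine ⟨ρbar, tbar, fun s a => (hρbar_pos s a).le, hρbar_flow, fun l => ?_, fun k => ?_, ?_⟩
    · show Cbar l - C l - 1 < Cbar l - C l
      linarith
    · show Rbar k - tbar - 1 < Rbar k - tbar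
      linarith
    · show tbar - β * Ebar - 1 < tbar - β * Ebar
      linarith
  have hfz0 : f z0 < c := hfs z0 hz0
  have hdown : ∀ x : ℝ, (∀ M : ℝ, 0 < M → f z0 - M * x < c) → 0 ≤ x := by
    intro x hx
    by_contra hneg
    push_neg at hneg
    have hMpos : 0 < (c - f z0 + 1) / (-x) := div_pos (by linarith) (by linarith)
    have h1 := hx _ hMpos
    have hx0 : x ≠ 0 := ne_of_lt hneg
    have he : (c - f z0 + 1) / (-x) * x = -(c - f z0 + 1) := by
      field_simp
    rw [he] at h1
    linarith
  have huu0 : ∀ l, 0 ≤ uu l := by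
    intro l
    refine hdown (uu l) fun M hM => ?_
    have hmem : z0 - M • (((fun j => if l = j then (1:ℝ) else 0) : Fin L → ℝ),
        (0 : Fin K → ℝ), (0:ℝ)) ∈ Sset := by
      refine ⟨ρbar, tbar, fun s a => (hρbar_pos s a).le, hρbar_flow, fun j => ?_, fun k => ?_, ?_⟩
      · show z0.1 j - M * (if l = j then (1:ℝ) else 0) < Cbar j - C j
        by_cases h : l = j
        · rw [if_pos h]
          show Cbar j - C j - 1 - M * 1 < Cbar j - C j
          nlinarith
        · rw [if_neg h]
          show Cbar j - C j - 1 - M * 0 < Cbar j - C j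
          linarith
      · show z0.2.1 k - M * 0 < Rbar k - tbar
        show Rbar k - tbar - 1 - M * 0 < Rbar k - tbar
        linarith
      · show z0.2.2 - M * 0 < tbar - β * Ebar
        show tbar - β * Ebar - 1 - M * 0 < tbar - β * Ebar
        linarith
    have h1 := hfs _ hmem
    rw [map_sub, map_smul, smul_eq_mul] at h1
    exact h1
  have hww0 : ∀ k, 0 ≤ ww k := by
    intro k
    refine hdown (ww k) fun M hM => ?_
    have hmem : z0 - M • ((0 : Fin L → ℝ),
        ((fun j => if k = j then (1:ℝ) else 0) : Fin K → ℝ), (0:ℝ)) ∈ Sset := by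
      refine ⟨ρbar, tbar, fun s a => (hρbar_pos s a).le, hρbar_flow, fun j => ?_, fun k' => ?_, ?_⟩
      · show z0.1 j - M * 0 < Cbar j - C j
        show Cbar j - C j - 1 - M * 0 < Cbar j - C j
        linarith
      · show z0.2.1 k' - M * (if k = k' then (1:ℝ) else 0) < Rbar k' - tbar
        by_cases h : k = k'
        · rw [if_pos h]
          show Rbar k' - tbar - 1 - M * 1 < Rbar k' - tbar
          nlinarith
        · rw [if_neg h]
          show Rbar k' - tbar - 1 - M * 0 < Rbar k' - tbar
          linarith
      · show z0.2.2 - M * 0 < tbar - β * Ebar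
        show tbar - β * Ebar - 1 - M * 0 < tbar - β * Ebar
        linarith
    have h1 := hfs _ hmem
    rw [map_sub, map_smul, smul_eq_mul] at h1
    exact h1
  have hlam0 : 0 ≤ lam := by
    refine hdown lam fun M hM => ?_
    have hmem : z0 - M • ((0 : Fin L → ℝ), (0 : Fin K → ℝ), (1:ℝ)) ∈ Sset := by
      refine ⟨ρbar, tbar, fun s a => (hρbar_pos s a).le, hρbar_flow, fun j => ?_, fun k => ?_, ?_⟩
      · show z0.1 j - M * 0 < Cbar j - C j
        show Cbar j - C j - 1 - M * 0 < Cbar j - C j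
        linarith
      · show z0.2.1 k - M * 0 < Rbar k - tbar
        show Rbar k - tbar - 1 - M * 0 < Rbar k - tbar
        linarith
      · show z0.2.2 - M * 1 < tbar - β * Ebar
        show tbar - β * Ebar - 1 - M * 1 < tbar - β * Ebar
        nlinarith
    have h1 := hfs _ hmem
    rw [map_sub, map_smul, smul_eq_mul] at h1
    exact h1
  have hcle : c ≤ pstar * lam := by
    have h1 := hft (0, 0, pstar) ⟨rfl, rfl, le_refl _⟩
    rw [hexp] at h1
    simpa using h1
  -- Lagrangian bound for every flow-feasible pair
  have hF1 : ∀ (ρ : Fin p → A → ℝ) (t : ℝ), (∀ s a, 0 ≤ ρ s a) →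
      (∀ s', ∑ a', ρ s' a' = μ0 s' + γ * ∑ s, ∑ a, T s a s' * ρ s a) →
      (∑ l, ((∑ s, ∑ a, r s a (Fin.castAdd K l) * ρ s a) - C l) * uu l)
      + (∑ k, ((∑ s, ∑ a, r s a (Fin.natAdd L k) * ρ s a) - t) * ww k)
      + (t - β * ∑ s, ∑ a, ρ s a * Real.log (ρ s a / ∑ a', ρ s a')) * lam ≤ c := by
    intro ρ t h0 hf
    set CL : Fin L → ℝ := fun l => ∑ s, ∑ a, r s a (Fin.castAdd K l) * ρ s a with hCL
    set RK : Fin K → ℝ := fun k => ∑ s, ∑ a, r s a (Fin.natAdd L k) * ρ s a with hRK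
    set EE : ℝ := ∑ s, ∑ a, ρ s a * Real.log (ρ s a / ∑ a', ρ s a') with hEE
    have hεstep : ∀ ε : ℝ, 0 < ε →
        ((∑ l, (CL l - C l) * uu l) + (∑ k, (RK k - t) * ww k) + (t - β * EE) * lam)
          - ε * ((∑ l, uu l) + (∑ k, ww k) + lam) < c := by
      intro ε hε
      have hmem : ((fun l => CL l - C l - ε), (fun k => RK k - t - ε), (t - β * EE - ε))
          ∈ Sset := by
        refine ⟨ρ, t, h0, hf, fun l => ?_, fun k => ?_, ?_⟩
        · show CL l - C l - ε < CL l - C l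
          linarith
        · show RK k - t - ε < RK k - t
          linarith
        · show t - β * EE - ε < t - β * EE
          linarith
      have h1 := hfs _ hmem
      rw [hexp] at h1
      simp only at h1
      have e1 : ∑ l, (CL l - C l - ε) * uu l =
          (∑ l, (CL l - C l) * uu l) - ε * ∑ l, uu l := by
        rw [Finset.mul_sum, ← Finset.sum_sub_distrib]
        exact Finset.sum_congr rfl fun l _ => by ring
      have e2 : ∑ k, (RK k - t - ε) * ww k =
          (∑ k, (RK k - t) * ww k) - ε * ∑ k, ww k := by
        rw [Finset.mul_sum, ← Finset.sum_sub_distrib]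
        exact Finset.sum_congr rfl fun k _ => by ring
      rw [e1, e2] at h1
      linarith
    by_contra hgt
    push_neg at hgt
    set lhs := (∑ l, (CL l - C l) * uu l) + (∑ k, (RK k - t) * ww k) + (t - β * EE) * lam
      with hlhs
    set Msum := (∑ l, uu l) + (∑ k, ww k) + lam with hMsum
    rcases le_or_gt Msum 0 with hM | hM
    · have h1 := hεstep 1 one_pos
      linarith
    · have h2 := hεstep ((lhs - c) / (2 * Msum)) (div_pos (by linarith) (by linarith))
      have he : (lhs - c) / (2 * Msum) * Msum = (lhs - c) / 2 := by
        field_simp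
      linarith
  -- lam is positive
  have hlampos : 0 < lam := by
    rcases hlam0.lt_or_eq with h | h
    · exact h
    exfalso
    have hc0 : c ≤ 0 := by
      rw [← h, mul_zero] at hcle
      exact hcle
    have hF1bar : (∑ l, (Cbar l - C l) * uu l) + (∑ k, (Rbar k - tbar) * ww k)
        + (tbar - β * Ebar) * lam ≤ c := hF1 ρbar tbar (fun s a => (hρbar_pos s a).le) hρbar_flow
    rw [← h, mul_zero, add_zero] at hF1bar
    have ht1 : ∀ l, 0 ≤ (Cbar l - C l) * uu l := fun l =>
      mul_nonneg (by linarith [hρbar_con l]) (huu0 l)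
    have ht2 : ∀ k, 0 ≤ (Rbar k - tbar) * ww k := fun k =>
      mul_nonneg (by linarith [htbarlt k]) (hww0 k)
    have hs1 : 0 ≤ ∑ l, (Cbar l - C l) * uu l := Finset.sum_nonneg fun l _ => ht1 l
    have hs2 : 0 ≤ ∑ k, (Rbar k - tbar) * ww k := Finset.sum_nonneg fun k _ => ht2 k
    have hz1 : ∑ l, (Cbar l - C l) * uu l = 0 := le_antisymm (by linarith) hs1
    have hz2 : ∑ k, (Rbar k - tbar) * ww k = 0 := le_antisymm (by linarith) hs2
    have huuz : ∀ l, uu l = 0 := by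
      intro l
      have := (Finset.sum_eq_zero_iff_of_nonneg fun l _ => ht1 l).mp hz1 l (Finset.mem_univ l)
      rcases mul_eq_zero.mp this with h' | h'
      · exfalso
        have := hρbar_con l
        rw [hCbar] at h'
        simp only at h'
        linarith
      · exact h'
    have hwwz : ∀ k, ww k = 0 := by
      intro k
      have := (Finset.sum_eq_zero_iff_of_nonneg fun k _ => ht2 k).mp hz2 k (Finset.mem_univ k)
      rcases mul_eq_zero.mp this with h' | h'
      · exfalso
        have := htbarlt k
        linarith
      · exact h'
    have hfz00 : f z0 = 0 := by
      rw [hexp]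
      simp [huuz, hwwz, ← h]
    linarith
  -- normalized multipliers
  set u : Fin L → ℝ := fun l => uu l / lam with hudef
  set w : Fin K → ℝ := fun k => ww k / lam with hwdef
  have hu0 : ∀ l, 0 ≤ u l := fun l => div_nonneg (huu0 l) hlampos.le
  have hw0 : ∀ k, 0 ≤ w k := fun k => div_nonneg (hww0 k) hlampos.le
  have hG : ∀ (ρ : Fin p → A → ℝ) (t : ℝ), (∀ s a, 0 ≤ ρ s a) →
      (∀ s', ∑ a', ρ s' a' = μ0 s' + γ * ∑ s, ∑ a, T s a s' * ρ s a) →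
      (∑ l, ((∑ s, ∑ a, r s a (Fin.castAdd K l) * ρ s a) - C l) * u l)
      + (∑ k, ((∑ s, ∑ a, r s a (Fin.natAdd L k) * ρ s a) - t) * w k)
      + (t - β * ∑ s, ∑ a, ρ s a * Real.log (ρ s a / ∑ a', ρ s a')) ≤ pstar := by
    intro ρ t h0 hf
    have h1 := (hF1 ρ t h0 hf).trans hcle
    set CL : Fin L → ℝ := fun l => ∑ s, ∑ a, r s a (Fin.castAdd K l) * ρ s a with hCL
    set RK : Fin K → ℝ := fun k => ∑ s, ∑ a, r s a (Fin.natAdd L k) * ρ s a with hRK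
    set EE : ℝ := ∑ s, ∑ a, ρ s a * Real.log (ρ s a / ∑ a', ρ s a') with hEE
    have e : ((∑ l, (CL l - C l) * u l) + (∑ k, (RK k - t) * w k) + (t - β * EE)) * lam =
        (∑ l, (CL l - C l) * uu l) + (∑ k, (RK k - t) * ww k) + (t - β * EE) * lam := by
      rw [add_mul, add_mul, Finset.sum_mul, Finset.sum_mul]
      congr 2
      · exact Finset.sum_congr rfl fun l _ => by
          rw [hudef]
          field_simp
      · exact Finset.sum_congr rfl fun k _ => by
          rw [hwdef]
          field_simp
    exact (mul_le_mul_iff_left₀ hlampos).mp (by rw [e]; exact h1)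
  have hw1 : ∑ k, w k = 1 := by
    by_contra hne
    have hgen : ∀ t : ℝ,
        (∑ l, (Cbar l - C l) * u l) + ((∑ k, Rbar k * w k) - t * ∑ k, w k)
        + (t - β * Ebar) ≤ pstar := by
      intro t
      have h1 := hG ρbar t (fun s a => (hρbar_pos s a).le) hρbar_flow
      have e2 : ∑ k, (Rbar k - t) * w k = (∑ k, Rbar k * w k) - t * ∑ k, w k := by
        rw [Finset.mul_sum, ← Finset.sum_sub_distrib]
        exact Finset.sum_congr rfl fun k _ => by ring
      rw [e2] at h1
      exact h1
    set a0 : ℝ := 1 - ∑ k, w k with ha0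
    have ha0ne : a0 ≠ 0 := sub_ne_zero.mpr fun hh => hne hh.symm
    set b0 : ℝ := (∑ l, (Cbar l - C l) * u l) + (∑ k, Rbar k * w k) - β * Ebar with hb0
    have hgen' : ∀ t : ℝ, b0 + t * a0 ≤ pstar := by
      intro t
      have h1 := hgen t
      have e : t * a0 = t - t * ∑ k, w k := by rw [ha0]; ring
      rw [e]
      rw [hb0]
      linarith
    have h1 := hgen' ((pstar + 1 - b0) / a0)
    have he : (pstar + 1 - b0) / a0 * a0 = pstar + 1 - b0 := div_mul_cancel₀ _ ha0ne
    rw [he] at h1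
    linarith
  obtain ⟨ρstar, h0s, hfs', heqs⟩ := exists_occ T hT0 hT1 γ hγ0 hγ1 β hβ r μ0 hμ0 hμ1
    (Fin.append u w) (V (Fin.append u w)) (hV _)
  have hGs := hG ρstar 0 h0s hfs'
  rw [split_obj r ρstar u w] at heqs
  have e1 : ∑ l, ((∑ s, ∑ a, r s a (Fin.castAdd K l) * ρstar s a) - C l) * u l =
      (∑ l, u l * ∑ s, ∑ a, r s a (Fin.castAdd K l) * ρstar s a) - ∑ l, u l * C l := by
    rw [← Finset.sum_sub_distrib]
    exact Finset.sum_congr rfl fun l _ => by ring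
  have e2 : ∑ k, ((∑ s, ∑ a, r s a (Fin.natAdd L k) * ρstar s a) - 0) * w k =
      ∑ k, w k * ∑ s, ∑ a, r s a (Fin.natAdd L k) * ρstar s a :=
    Finset.sum_congr rfl fun k _ => by ring
  rw [e1, e2] at hGs
  have hfinal : ∑ s, μ0 s * V (Fin.append u w) s - ∑ l, u l * C l ≤ pstar := by
    linarith
  exact le_trans (csInf_le hbddB ⟨u, w, hu0, hw0, hw1, rfl⟩) hfinal
end

section
/- Differentiability and gradient of the soft fixed point (Theorem 3.3): in the finite soft MOMDP setup, let V : ℝ^n → (S → ℝ) be the map sending each parameter θ to the unique fixed point of T_θ (i.e., V(θ) = T_θ(V(θ)) for all θ). Then for each state s the function θ ↦ V(θ)(s) is differentiable on ℝ^n, and its gradient equals the vector value function of the softmax policy: ∇_θ V(θ)(s) = w^{π_θ}(s), where π_θ(a|s) = exp(Q_θ(s,a)/β) / Σ_{a'} exp(Q_θ(s,a')/β) with Q_θ(s,a) = ⟨θ, r(s,a)⟩ + γ Σ_{s'} T(s'|s,a) V(θ)(s'), and w^{π_θ} : S → ℝ^n is the unique solution of the vector Bellman evaluation equation w(s) = Σ_a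 π_θ(a|s)( r(s,a) + γ Σ_{s'} T(s'|s,a) w(s') ). -/
private lemma lse_le {A : Type*} [Fintype A] [Nonempty A] {β : ℝ} (hβ : 0 < β)
    (u v : A → ℝ) (c : ℝ) (h : ∀ a, u a ≤ v a + c) :
    β * Real.log (∑ a, Real.exp (u a / β)) ≤ β * Real.log (∑ a, Real.exp (v a / β)) + c := by
  have hpos : (0:ℝ) < ∑ a, Real.exp (u a / β) :=
    Finset.sum_pos (fun a _ => Real.exp_pos _) Finset.univ_nonempty
  have h1 : ∑ a, Real.exp (u a / β) ≤ Real.exp (c / β) * ∑ a, Real.exp (v a / β) := by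
    rw [Finset.mul_sum]
    refine Finset.sum_le_sum fun a _ => ?_
    rw [← Real.exp_add, ← add_div]
    apply Real.exp_le_exp.2
    gcongr
    linarith [h a]
  have h2 := Real.log_le_log hpos h1
  rw [Real.log_mul (Real.exp_ne_zero _) (by positivity), Real.log_exp] at h2
  have h3 := mul_le_mul_of_nonneg_left h2 hβ.le
  rw [mul_add, mul_div_cancel₀ _ hβ.ne'] at h3
  linarith

private lemma coord_le {n : ℕ} (x : EuclideanSpace ℝ (Fin n)) (i : Fin n) : |x i| ≤ ‖x‖ := by
  rw [EuclideanSpace.norm_eq, ← Real.sqrt_sq_eq_abs]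
  apply Real.sqrt_le_sqrt
  have := Finset.single_le_sum (f := fun j => ‖x j‖ ^ 2) (fun j _ => by positivity)
    (Finset.mem_univ i)
  simpa [Real.norm_eq_abs, sq_abs] using this

/-- The linear functional `z ↦ (⟨z.1, r s a⟩ + γ ∑ T z.2)/β`. -/
private noncomputable def ell {p n : ℕ} {A : Type*} (T : Fin p → A → Fin p → ℝ)
    (γ β : ℝ) (r : Fin p → A → Fin n → ℝ) (s : Fin p) (a : A) :
    (EuclideanSpace ℝ (Fin n) × (Fin p → ℝ)) →L[ℝ] ℝ :=
  LinearMap.toContinuousLinearMap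
    { toFun := fun z => (∑ i, z.1 i * r s a i + γ * ∑ s', T s a s' * z.2 s') / β
      map_add' := by
        intro z w
        simp only [Prod.fst_add, Prod.snd_add, PiLp.add_apply, Pi.add_apply, add_mul, mul_add,
          Finset.sum_add_distrib]
        ring
      map_smul' := by
        intro c z
        simp only [Prod.smul_fst, Prod.smul_snd, PiLp.smul_apply, Pi.smul_apply, smul_eq_mul,
          RingHom.id_apply, Finset.mul_sum]
        have e1 : ∑ x, c * z.1 x * r s a x = c * ∑ x, z.1 x * r s a x := by
          rw [Finset.mul_sum]; exact Finset.sum_congr rfl fun i _ => by ring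
        have e2 : ∑ i, γ * (T s a i * (c * z.2 i)) = c * ∑ i, γ * (T s a i * z.2 i) := by
          rw [Finset.mul_sum]; exact Finset.sum_congr rfl fun i _ => by ring
        rw [e1, e2]; ring }

private lemma ell_apply {p n : ℕ} {A : Type*} (T : Fin p → A → Fin p → ℝ)
    (γ β : ℝ) (r : Fin p → A → Fin n → ℝ) (s : Fin p) (a : A)
    (z : EuclideanSpace ℝ (Fin n) × (Fin p → ℝ)) :
    ell T γ β r s a z = (∑ i, z.1 i * r s a i + γ * ∑ s', T s a s' * z.2 s') / β := rfl

set_option maxHeartbeats 1000000 in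
/-- Differentiability and gradient of the soft fixed point (Theorem 3.3).
`V θ` is the fixed point of the soft Bellman operator `T_θ`; at a parameter `θ`,
`Q` is the soft action-value `Q_θ`, `π` is the softmax policy `π_θ`, and
`W : S → ℝ^n` is the (unique) solution of the vector Bellman evaluation equation for
`π_θ`.  Then for each state `s`, the map `θ' ↦ V θ' s` has gradient `W s` at `θ`. -/
theorem stmt_5 {p n : ℕ} {A : Type*} [Fintype A] [Nonempty A]
    (T : Fin p → A → Fin p → ℝ)
    (hT0 : ∀ s a s', 0 ≤ T s a s') (hT1 : ∀ s a, ∑ s', T s a s' = 1)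
    (γ : ℝ) (hγ0 : 0 ≤ γ) (hγ1 : γ < 1)
    (β : ℝ) (hβ : 0 < β)
    (r : Fin p → A → Fin n → ℝ)
    (V : EuclideanSpace ℝ (Fin n) → Fin p → ℝ)
    (hV : ∀ θ s, V θ s = β * Real.log (∑ a : A, Real.exp
      ((∑ i, θ i * r s a i + γ * ∑ s', T s a s' * V θ s') / β)))
    (θ : EuclideanSpace ℝ (Fin n))
    (Q : Fin p → A → ℝ)
    (hQ : ∀ s a, Q s a = ∑ i, θ i * r s a i + γ * ∑ s', T s a s' * V θ s')
    (π : Fin p → A → ℝ)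
    (hπ : ∀ s a, π s a = Real.exp (Q s a / β) / ∑ a', Real.exp (Q s a' / β))
    (W : Fin p → EuclideanSpace ℝ (Fin n))
    (hW : ∀ s i, W s i = ∑ a, π s a * (r s a i + γ * ∑ s', T s a s' * W s' i)) :
    ∀ s, HasGradientAt (fun θ' => V θ' s) (W s) θ := by
  have h1γ : (0:ℝ) < 1 - γ := by linarith
  -- softmax basic facts
  have hSpos : ∀ s, (0:ℝ) < ∑ a, Real.exp (Q s a / β) :=
    fun s => Finset.sum_pos (fun a _ => Real.exp_pos _) Finset.univ_nonempty
  have hπ0 : ∀ s a, 0 ≤ π s a := fun s a => by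
    rw [hπ]; exact div_nonneg (Real.exp_pos _).le (hSpos s).le
  have hπ1 : ∀ s, ∑ a, π s a = 1 := by
    intro s
    simp_rw [hπ]
    rw [← Finset.sum_div, div_self (hSpos s).ne']
  -- the Bellman map G and its fixed-point property
  set G : (EuclideanSpace ℝ (Fin n) × (Fin p → ℝ)) → Fin p → ℝ :=
    fun z s => β * Real.log (∑ a, Real.exp (ell T γ β r s a z)) with hG
  have hfix : ∀ x, V x = G (x, V x) := by
    intro x
    funext s
    rw [hV x s, hG]
    simp only [ell_apply]
  have hellz0 : ∀ s a, ell T γ β r s a (θ, V θ) = Q s a / β := by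
    intro s a
    rw [ell_apply, hQ]
  -- derivative of G at (θ, V θ)
  set Ds : Fin p → (EuclideanSpace ℝ (Fin n) × (Fin p → ℝ)) →L[ℝ] ℝ :=
    fun s => ∑ a, (β * π s a) • ell T γ β r s a with hDs
  have hder : HasFDerivAt G (ContinuousLinearMap.pi Ds) (θ, V θ) := by
    apply hasFDerivAt_pi''
    intro s
    rw [ContinuousLinearMap.proj_pi]
    have hsum0 : ∑ a, Real.exp (ell T γ β r s a (θ, V θ)) = ∑ a, Real.exp (Q s a / β) := by
      simp_rw [hellz0]
    have h1 : HasFDerivAt (fun z => ∑ a, Real.exp (ell T γ β r s a z))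
        (∑ a, Real.exp (ell T γ β r s a (θ, V θ)) • ell T γ β r s a) (θ, V θ) :=
      HasFDerivAt.fun_sum fun a _ => ((ell T γ β r s a).hasFDerivAt).exp
    have hne : ∑ a, Real.exp (ell T γ β r s a (θ, V θ)) ≠ 0 := by
      rw [hsum0]; exact (hSpos s).ne'
    have h2 := (h1.log hne).const_mul β
    refine h2.congr_fderiv (Eq.symm ?_)
    refine ContinuousLinearMap.ext fun z => ?_
    simp only [hDs, ContinuousLinearMap.sum_apply, ContinuousLinearMap.smul_apply,
      ContinuousLinearMap.coe_smul', Pi.smul_apply, smul_eq_mul, hellz0, hsum0]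
    rw [Finset.mul_sum, Finset.mul_sum]
    refine Finset.sum_congr rfl fun a _ => ?_
    rw [hπ]
    ring
  -- the little-o from differentiability, composed with x ↦ (x, V x)
  set Rb : ℝ := ∑ s, ∑ a, ∑ i, |r s a i| with hRb
  have hr_le : ∀ s a, ∑ i, |r s a i| ≤ Rb := by
    intro s a
    calc ∑ i, |r s a i|
        ≤ ∑ a, ∑ i, |r s a i| :=
          Finset.single_le_sum (f := fun a => ∑ i, |r s a i|)
            (fun a _ => Finset.sum_nonneg fun i _ => abs_nonneg _) (Finset.mem_univ a)
      _ ≤ Rb :=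
          Finset.single_le_sum (f := fun s => ∑ a, ∑ i, |r s a i|)
            (fun s _ => Finset.sum_nonneg fun a _ => Finset.sum_nonneg fun i _ => abs_nonneg _)
            (Finset.mem_univ s)
  -- one-sided Lipschitz-type bound for the Bellman numerators
  have hub : ∀ (x y : EuclideanSpace ℝ (Fin n)) s a,
      (∑ i, x i * r s a i + γ * ∑ s', T s a s' * V x s') ≤
      (∑ i, y i * r s a i + γ * ∑ s', T s a s' * V y s')
        + (Rb * ‖x - y‖ + γ * ‖V x - V y‖) := by
    intro x y s a
    have h1 : ∑ i, x i * r s a i - ∑ i, y i * r s a i ≤ Rb * ‖x - y‖ := by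
      rw [← Finset.sum_sub_distrib]
      calc ∑ i, (x i * r s a i - y i * r s a i)
          ≤ ∑ i, ‖x - y‖ * |r s a i| := by
            refine Finset.sum_le_sum fun i _ => ?_
            have h2 : x i * r s a i - y i * r s a i = (x - y) i * r s a i := by
              rw [PiLp.sub_apply]; ring
            rw [h2]
            calc (x - y) i * r s a i ≤ |(x - y) i * r s a i| := le_abs_self _
              _ = |(x - y) i| * |r s a i| := abs_mul _ _
              _ ≤ ‖x - y‖ * |r s a i| :=
                  mul_le_mul_of_nonneg_right (coord_le _ i) (abs_nonneg _)
        _ = ‖x - y‖ * ∑ i, |r s a i| := by rw [Finset.mul_sum]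
        _ ≤ ‖x - y‖ * Rb := mul_le_mul_of_nonneg_left (hr_le s a) (norm_nonneg _)
        _ = Rb * ‖x - y‖ := mul_comm _ _
    have h2 : ∑ s', T s a s' * V x s' - ∑ s', T s a s' * V y s' ≤ ‖V x - V y‖ := by
      rw [← Finset.sum_sub_distrib]
      calc ∑ s', (T s a s' * V x s' - T s a s' * V y s')
          ≤ ∑ s', T s a s' * ‖V x - V y‖ := by
            refine Finset.sum_le_sum fun s' _ => ?_
            rw [← mul_sub]
            refine mul_le_mul_of_nonneg_left ?_ (hT0 s a s')
            have h3 := norm_le_pi_norm (V x - V y) s'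
            rw [Pi.sub_apply, Real.norm_eq_abs] at h3
            exact le_trans (le_abs_self _) h3
        _ = ‖V x - V y‖ := by rw [← Finset.sum_mul, hT1, one_mul]
    nlinarith [mul_le_mul_of_nonneg_left h2 hγ0]
  -- Lipschitz continuity of V
  have hVnorm : ∀ x y : EuclideanSpace ℝ (Fin n),
      ‖V x - V y‖ ≤ Rb * ‖x - y‖ + γ * ‖V x - V y‖ := by
    intro x y
    have hc0 : 0 ≤ Rb * ‖x - y‖ + γ * ‖V x - V y‖ := by
      have := norm_nonneg (x - y); have := norm_nonneg (V x - V y)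
      have hRb0 : 0 ≤ Rb := by positivity
      nlinarith
    rw [pi_norm_le_iff_of_nonneg hc0]
    intro s
    rw [Pi.sub_apply, Real.norm_eq_abs, abs_le]
    constructor
    · have h5 : V y s ≤ V x s + (Rb * ‖x - y‖ + γ * ‖V x - V y‖) := by
        rw [hV y s, hV x s, norm_sub_rev x y, norm_sub_rev (V x) (V y)]
        exact lse_le hβ _ _ _ (fun a => hub y x s a)
      linarith
    · have h4 : V x s ≤ V y s + (Rb * ‖x - y‖ + γ * ‖V x - V y‖) := by
        rw [hV x s, hV y s]
        exact lse_le hβ _ _ _ (fun a => hub x y s a)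
      linarith
  have hVlip : ∀ x, ‖V x - V θ‖ ≤ (Rb / (1 - γ)) * ‖x - θ‖ := by
    intro x
    have h1 := hVnorm x θ
    rw [div_mul_eq_mul_div, le_div_iff₀ h1γ]
    nlinarith
  -- continuity of x ↦ (x, V x) at θ
  have htend : Filter.Tendsto (fun x => (x, V x)) (nhds θ) (nhds (θ, V θ)) := by
    refine Filter.Tendsto.prodMk_nhds Filter.tendsto_id ?_
    rw [← tendsto_sub_nhds_zero_iff]
    apply squeeze_zero_norm hVlip
    have h1 : Filter.Tendsto (fun x : EuclideanSpace ℝ (Fin n) => ‖x - θ‖)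
        (nhds θ) (nhds ‖θ - θ‖) :=
      ((continuous_id.sub continuous_const).norm).tendsto θ
    have h2 := h1.const_mul (Rb / (1 - γ))
    simpa using h2
  have hgO : (fun x => (x, V x) - (θ, V θ)) =O[nhds θ]
      (fun x : EuclideanSpace ℝ (Fin n) => x - θ) := by
    apply Asymptotics.IsBigO.of_bound (max 1 (Rb / (1 - γ)))
    refine Filter.Eventually.of_forall fun x => ?_
    rw [Prod.mk_sub_mk, Prod.norm_def]
    apply max_le
    · calc ‖x - θ‖ = 1 * ‖x - θ‖ := (one_mul _).symm
        _ ≤ max 1 (Rb / (1 - γ)) * ‖x - θ‖ :=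
            mul_le_mul_of_nonneg_right (le_max_left _ _) (norm_nonneg _)
    · calc ‖V x - V θ‖ ≤ (Rb / (1 - γ)) * ‖x - θ‖ := hVlip x
        _ ≤ max 1 (Rb / (1 - γ)) * ‖x - θ‖ :=
            mul_le_mul_of_nonneg_right (le_max_right _ _) (norm_nonneg _)
  -- the remainder term is o(x - θ)
  have hρ0 := hder.isLittleO.comp_tendsto htend
  simp only [Function.comp_def] at hρ0
  set ρfun : EuclideanSpace ℝ (Fin n) → Fin p → ℝ :=
    fun x => G (x, V x) - G (θ, V θ) - (ContinuousLinearMap.pi Ds) ((x, V x) - (θ, V θ))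
    with hρfun
  have hρ1 : ρfun =o[nhds θ] (fun x : EuclideanSpace ℝ (Fin n) => x - θ) :=
    hρ0.trans_isBigO hgO
  -- pointwise formula for the remainder
  have hρs : ∀ x s, ρfun x s = V x s - V θ s
      - ∑ a, π s a * ((∑ i, (x i - θ i) * r s a i)
        + γ * ∑ s', T s a s' * (V x s' - V θ s')) := by
    intro x s
    rw [hρfun]
    simp only [Pi.sub_apply]
    rw [← hfix x, ← hfix θ]
    congr 1
    rw [ContinuousLinearMap.pi_apply, hDs]
    simp only [ContinuousLinearMap.sum_apply, ContinuousLinearMap.smul_apply, smul_eq_mul,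
      ell_apply]
    refine Finset.sum_congr rfl fun a _ => ?_
    have h1 : ((x, V x) - (θ, V θ)).1 = x - θ := rfl
    have h2 : ((x, V x) - (θ, V θ)).2 = V x - V θ := rfl
    rw [h1, h2]
    have h3 : ∀ i, (x - θ) i = x i - θ i := fun i => rfl
    have h4 : ∀ s', (V x - V θ) s' = V x s' - V θ s' := fun s' => rfl
    simp only [h3, h4]
    field_simp
  -- the dot product of the Bellman equation for W
  have hWdot : ∀ s (h : Fin n → ℝ), ∑ i, W s i * h i
      = ∑ a, π s a * ((∑ i, (h i) * r s a i) + γ * ∑ s', T s a s' * ∑ i, W s' i * h i) := by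
    intro s h
    calc ∑ i, W s i * h i
        = ∑ i, (∑ a, π s a * (r s a i + γ * ∑ s', T s a s' * W s' i)) * h i :=
          Finset.sum_congr rfl fun i _ => by rw [← hW s i]
      _ = ∑ i, ∑ a, π s a * (r s a i + γ * ∑ s', T s a s' * W s' i) * h i := by
          refine Finset.sum_congr rfl fun i _ => ?_
          rw [Finset.sum_mul]
      _ = ∑ a, ∑ i, π s a * (r s a i + γ * ∑ s', T s a s' * W s' i) * h i := Finset.sum_comm
      _ = ∑ a, π s a * ((∑ i, (h i) * r s a i) + γ * ∑ s', T s a s' * ∑ i, W s' i * h i) := by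
          refine Finset.sum_congr rfl fun a _ => ?_
          have hswap : ∑ i, (∑ s', T s a s' * W s' i) * h i
              = ∑ s', T s a s' * ∑ i, W s' i * h i := by
            calc ∑ i, (∑ s', T s a s' * W s' i) * h i
                = ∑ i, ∑ s', T s a s' * W s' i * h i :=
                  Finset.sum_congr rfl fun i _ => by rw [Finset.sum_mul]
              _ = ∑ s', ∑ i, T s a s' * W s' i * h i := Finset.sum_comm
              _ = ∑ s', T s a s' * ∑ i, W s' i * h i := by
                  refine Finset.sum_congr rfl fun s' _ => ?_
                  rw [Finset.mul_sum]
                  exact Finset.sum_congr rfl fun i _ => by ring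
          calc ∑ i, π s a * (r s a i + γ * ∑ s', T s a s' * W s' i) * h i
              = π s a * ∑ i, (r s a i * h i + γ * ((∑ s', T s a s' * W s' i) * h i)) := by
                rw [Finset.mul_sum]
                exact Finset.sum_congr rfl fun i _ => by ring
            _ = π s a * ((∑ i, (h i) * r s a i)
                  + γ * ∑ i, (∑ s', T s a s' * W s' i) * h i) := by
                rw [Finset.sum_add_distrib]
                congr 1
                rw [← Finset.mul_sum]
                congr 1
                exact Finset.sum_congr rfl fun i _ => by ring
            _ = _ := by rw [hswap]
  -- the error function and its fixed-point identity
  set e : EuclideanSpace ℝ (Fin n) → Fin p → ℝ :=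
    fun x s => V x s - V θ s - ∑ i, W s i * (x i - θ i) with he
  have heq : ∀ x s, e x s = (∑ a, π s a * (γ * ∑ s', T s a s' * e x s')) + ρfun x s := by
    intro x s
    have main : ∑ a, π s a * ((∑ i, (x i - θ i) * r s a i)
          + γ * ∑ s', T s a s' * (V x s' - V θ s'))
        - ∑ a, π s a * ((∑ i, (x i - θ i) * r s a i)
          + γ * ∑ s', T s a s' * ∑ i, W s' i * (x i - θ i))
        = ∑ a, π s a * (γ * ∑ s', T s a s'
            * (V x s' - V θ s' - ∑ i, W s' i * (x i - θ i))) := by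
      rw [← Finset.sum_sub_distrib]
      refine Finset.sum_congr rfl fun a _ => ?_
      rw [← mul_sub]
      congr 1
      have hPQ : ∑ s', T s a s' * (V x s' - V θ s')
          - ∑ s', T s a s' * ∑ i, W s' i * (x i - θ i)
          = ∑ s', T s a s' * (V x s' - V θ s' - ∑ i, W s' i * (x i - θ i)) := by
        rw [← Finset.sum_sub_distrib]
        exact Finset.sum_congr rfl fun s' _ => by ring
      rw [← hPQ]
      ring
    have hkey := hWdot s (fun i => x i - θ i)
    rw [hρs x s]
    simp only [he]
    linarith [main, hkey]
  -- contraction bound for the policy-averaged operator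
  have hB : ∀ (w : Fin p → ℝ) s, |∑ a, π s a * (γ * ∑ s', T s a s' * w s')| ≤ γ * ‖w‖ := by
    intro w s
    calc |∑ a, π s a * (γ * ∑ s', T s a s' * w s')|
        ≤ ∑ a, |π s a * (γ * ∑ s', T s a s' * w s')| := Finset.abs_sum_le_sum_abs _ _
      _ ≤ ∑ a, π s a * (γ * ‖w‖) := by
          refine Finset.sum_le_sum fun a _ => ?_
          rw [abs_mul, abs_of_nonneg (hπ0 s a), abs_mul, abs_of_nonneg hγ0]
          refine mul_le_mul_of_nonneg_left ?_ (hπ0 s a)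
          refine mul_le_mul_of_nonneg_left ?_ hγ0
          calc |∑ s', T s a s' * w s'| ≤ ∑ s', |T s a s' * w s'| :=
                Finset.abs_sum_le_sum_abs _ _
            _ ≤ ∑ s', T s a s' * ‖w‖ := by
                refine Finset.sum_le_sum fun s' _ => ?_
                rw [abs_mul, abs_of_nonneg (hT0 s a s')]
                refine mul_le_mul_of_nonneg_left ?_ (hT0 s a s')
                have h3 := norm_le_pi_norm w s'
                rwa [Real.norm_eq_abs] at h3
            _ = ‖w‖ := by rw [← Finset.sum_mul, hT1, one_mul]
      _ = γ * ‖w‖ := by rw [← Finset.sum_mul, hπ1, one_mul]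
  -- the error is controlled by the remainder
  have hbound : ∀ x, ‖e x‖ ≤ (1 - γ)⁻¹ * ‖ρfun x‖ := by
    intro x
    have h5 : ‖e x‖ ≤ γ * ‖e x‖ + ‖ρfun x‖ := by
      have hc0 : (0:ℝ) ≤ γ * ‖e x‖ + ‖ρfun x‖ :=
        add_nonneg (mul_nonneg hγ0 (norm_nonneg _)) (norm_nonneg _)
      rw [pi_norm_le_iff_of_nonneg hc0]
      intro s
      rw [Real.norm_eq_abs, heq x s]
      calc |(∑ a, π s a * (γ * ∑ s', T s a s' * e x s')) + ρfun x s|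
          ≤ |∑ a, π s a * (γ * ∑ s', T s a s' * e x s')| + |ρfun x s| := abs_add_le _ _
        _ ≤ γ * ‖e x‖ + ‖ρfun x‖ := by
            have h6 := hB (e x) s
            have h7 := norm_le_pi_norm (ρfun x) s
            rw [Real.norm_eq_abs] at h7
            linarith
    rw [inv_mul_eq_div, le_div_iff₀ h1γ]
    nlinarith [norm_nonneg (ρfun x)]
  -- conclusion
  intro s
  rw [hasGradientAt_iff_isLittleO]
  have hesO : (fun x => e x s) =o[nhds θ] (fun x : EuclideanSpace ℝ (Fin n) => x - θ) := by
    have hO1 : (fun x => e x s) =O[nhds θ] e := by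
      apply Asymptotics.IsBigO.of_bound 1
      refine Filter.Eventually.of_forall fun x => ?_
      rw [one_mul]
      exact norm_le_pi_norm (e x) s
    have hO2 : e =O[nhds θ] ρfun :=
      Asymptotics.IsBigO.of_bound ((1 - γ)⁻¹) (Filter.Eventually.of_forall hbound)
    exact hO1.trans_isLittleO (hO2.trans_isLittleO hρ1)
  have hfun : (fun x => V x s - V θ s - (inner ℝ (W s) (x - θ) : ℝ)) = fun x => e x s := by
    funext x
    have hinner : (inner ℝ (W s) (x - θ) : ℝ) = ∑ i, W s i * (x i - θ i) := by
      rw [PiLp.inner_apply]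
      refine Finset.sum_congr rfl fun i _ => ?_
      have hsub : (x - θ) i = x i - θ i := rfl
      rw [hsub]
      simp [RCLike.inner_apply, conj_trivial, mul_comm]
    simp only [he, hinner]
  rw [hfun]
  exact hesO
end
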